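/- arXiv:2602.01112 — 5 statements merged into one kernel-verified Lean document; each statement's English description precedes it below -/
import Mathlib

section
/- Let γ₁,…,γₙ be positive real numbers. Then the number of lattice points (x₁,…,xₙ) ∈ ℤ₊ⁿ with Σ γᵢxᵢ ≤ x equals xⁿ/(n!·γ₁⋯γₙ) + O(x^{n-1}) as x → ∞. -/
open Filter MeasureTheory

private lemma pow_sandwich {b g : ℝ} (hb : 0 ≤ b) (hg : 0 ≤ g) (n : ℕ) :
    (n + 1 : ℝ) * g * b ^ n ≤ (b + g) ^ (n + 1) - b ^ (n + 1) ∧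
      (b + g) ^ (n + 1) - b ^ (n + 1) ≤ (n + 1 : ℝ) * g * (b + g) ^ n := by
  have hbg : b ≤ b + g := le_add_of_nonneg_right hg
  have key : (∑ i ∈ Finset.range (n + 1), (b + g) ^ i * b ^ (n - i)) * g
      = (b + g) ^ (n + 1) - b ^ (n + 1) := by
    have h := geom_sum₂_mul (b + g) b (n + 1)
    simpa using h
  constructor
  · rw [← key]
    have hterm : ∀ i ∈ Finset.range (n + 1), b ^ n ≤ (b + g) ^ i * b ^ (n - i) := by
      intro i hi
      have hin : i ≤ n := Nat.lt_succ_iff.mp (Finset.mem_range.mp hi)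
      calc b ^ n = b ^ i * b ^ (n - i) := by rw [← pow_add]; congr 1; omega
        _ ≤ (b + g) ^ i * b ^ (n - i) :=
            mul_le_mul_of_nonneg_right (pow_le_pow_left₀ hb hbg i) (pow_nonneg hb _)
    calc (n + 1 : ℝ) * g * b ^ n = (∑ _i ∈ Finset.range (n + 1), b ^ n) * g := by
          rw [Finset.sum_const, Finset.card_range]; push_cast; ring
      _ ≤ _ := mul_le_mul_of_nonneg_right (Finset.sum_le_sum hterm) hg
  · rw [← key]
    have hterm : ∀ i ∈ Finset.range (n + 1), (b + g) ^ i * b ^ (n - i) ≤ (b + g) ^ n := by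
      intro i hi
      have hin : i ≤ n := Nat.lt_succ_iff.mp (Finset.mem_range.mp hi)
      calc (b + g) ^ i * b ^ (n - i)
          ≤ (b + g) ^ i * (b + g) ^ (n - i) :=
            mul_le_mul_of_nonneg_left (pow_le_pow_left₀ hb hbg _) (pow_nonneg (hb.trans hbg) _)
        _ = (b + g) ^ n := by rw [← pow_add]; congr 1; omega
    calc (∑ i ∈ Finset.range (n + 1), (b + g) ^ i * b ^ (n - i)) * g
        ≤ (∑ _i ∈ Finset.range (n + 1), (b + g) ^ n) * g :=
          mul_le_mul_of_nonneg_right (Finset.sum_le_sum hterm) hg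
      _ = (n + 1 : ℝ) * g * (b + g) ^ n := by
          rw [Finset.sum_const, Finset.card_range]; push_cast; ring

private lemma sum_pow_est {g x : ℝ} (hg : 0 < g) (hx : 0 ≤ x) (n : ℕ) :
    |(∑ k ∈ Finset.range (⌊x / g⌋₊ + 1), (x - g * k) ^ n)
      - x ^ (n + 1) / ((n + 1) * g)| ≤ x ^ n + g ^ n := by
  set K := ⌊x / g⌋₊ with hK
  have hxg : 0 ≤ x / g := div_nonneg hx hg.le
  have hKle : (K : ℝ) ≤ x / g := Nat.floor_le hxg
  have hKx : g * K ≤ x := by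
    have := (le_div_iff₀ hg).mp hKle
    linarith [this]
  have haK : 0 ≤ x - g * K := by linarith
  have haKg : x - g * K < g := by
    have h2 : x / g < (K : ℝ) + 1 := Nat.lt_floor_add_one _
    have := (div_lt_iff₀ hg).mp h2
    nlinarith
  have ha : ∀ k : ℕ, k ≤ K → 0 ≤ x - g * k := by
    intro k hk
    have h1 : (k : ℝ) ≤ K := Nat.cast_le.mpr hk
    nlinarith
  have tel : ∑ k ∈ Finset.range K,
      ((x - g * k) ^ (n + 1) - (x - g * (k + 1 : ℕ)) ^ (n + 1))
      = x ^ (n + 1) - (x - g * K) ^ (n + 1) := by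
    rw [Finset.sum_range_sub' (fun k : ℕ => (x - g * k) ^ (n + 1))]
    norm_num
  -- lower telescoping bound: each difference ≤ (n+1) g (x - g k)^n
  have hup : ∀ k ∈ Finset.range K,
      (x - g * k) ^ (n + 1) - (x - g * (k + 1 : ℕ)) ^ (n + 1)
        ≤ (n + 1 : ℝ) * g * (x - g * k) ^ n := by
    intro k hk
    have hkK : k + 1 ≤ K := Finset.mem_range.mp hk
    have hb : 0 ≤ x - g * (k + 1 : ℕ) := ha _ hkK
    have hbg : (x - g * (k + 1 : ℕ)) + g = x - g * k := by push_cast; ring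
    have h := (pow_sandwich hb hg.le n).2
    rw [hbg] at h
    exact h
  have hlo : ∀ k ∈ Finset.range K,
      (n + 1 : ℝ) * g * (x - g * (k + 1 : ℕ)) ^ n
        ≤ (x - g * k) ^ (n + 1) - (x - g * (k + 1 : ℕ)) ^ (n + 1) := by
    intro k hk
    have hkK : k + 1 ≤ K := Finset.mem_range.mp hk
    have hb : 0 ≤ x - g * (k + 1 : ℕ) := ha _ hkK
    have hbg : (x - g * (k + 1 : ℕ)) + g = x - g * k := by push_cast; ring
    have h := (pow_sandwich hb hg.le n).1
    rw [hbg] at h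
    exact h
  have hn1g : (0 : ℝ) < (n + 1 : ℝ) * g := by positivity
  set I := x ^ (n + 1) / ((n + 1) * g) with hI
  have hIval : ((n + 1 : ℝ) * g) * I = x ^ (n + 1) := by
    rw [hI]; field_simp
  set S := ∑ k ∈ Finset.range (K + 1), (x - g * k) ^ n with hS
  rw [abs_le]
  constructor
  · -- S ≥ I - g^n
    have h1 : (n + 1 : ℝ) * g * (∑ k ∈ Finset.range K, (x - g * k) ^ n)
        ≥ x ^ (n + 1) - (x - g * K) ^ (n + 1) := by
      rw [← tel, Finset.mul_sum]
      apply Finset.sum_le_sum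
      intro k hk
      have := hup k hk
      linarith
    have hS1 : S = (∑ k ∈ Finset.range K, (x - g * k) ^ n) + (x - g * K) ^ n :=
      Finset.sum_range_succ _ _
    have hfK : (x - g * K) ^ (n + 1) ≤ g ^ (n + 1) :=
      pow_le_pow_left₀ haK haKg.le _
    have hsKn : 0 ≤ (x - g * K) ^ n := pow_nonneg haK _
    have hgn : g ^ (n + 1) = g * g ^ n := by ring
    have hxn : 0 ≤ x ^ n := pow_nonneg hx _
    have hmain : 0 ≤ ((n : ℝ) + 1) * g * (S - I + g ^ n) := by
      nlinarith [h1, hfK, hIval, mul_nonneg hn1g.le hsKn,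
        mul_nonneg (Nat.cast_nonneg (α := ℝ) n) (mul_nonneg hg.le (pow_nonneg hg.le n))]
    nlinarith [hmain, mul_nonneg hn1g.le hxn]
  · -- S ≤ x^n + I
    have h1 : (n + 1 : ℝ) * g * (∑ k ∈ Finset.range K, (x - g * (k + 1 : ℕ)) ^ n)
        ≤ x ^ (n + 1) - (x - g * K) ^ (n + 1) := by
      rw [← tel, Finset.mul_sum]
      apply Finset.sum_le_sum
      intro k hk
      have := hlo k hk
      linarith
    have hS1 : S = (∑ k ∈ Finset.range K, (x - g * (k + 1 : ℕ)) ^ n) + (x - g * (0 : ℕ)) ^ n :=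
      Finset.sum_range_succ' _ _
    have hfK : 0 ≤ (x - g * K) ^ (n + 1) := pow_nonneg haK _
    have h0 : x - g * (0 : ℕ) = x := by norm_num
    have hgn : 0 ≤ g ^ n := pow_nonneg hg.le _
    rw [h0] at hS1
    have hmain : ((n : ℝ) + 1) * g * (S - I - x ^ n) ≤ 0 := by
      nlinarith [h1, hfK, hIval]
    nlinarith [hmain, mul_nonneg hn1g.le hgn]

private lemma count_finite (n : ℕ) (γ : Fin n → ℝ) (hγ : ∀ i, 0 < γ i) (x : ℝ) :
    {a : Fin n → ℕ | (∑ i, γ i * (a i : ℝ)) ≤ x}.Finite := by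
  apply Set.Finite.subset (Set.Finite.pi (fun i : Fin n => Set.finite_Iic (⌊x / γ i⌋₊)))
  intro a ha
  simp only [Set.mem_setOf_eq] at ha
  simp only [Set.mem_pi, Set.mem_univ, forall_true_left, Set.mem_Iic]
  intro i
  have h1 : γ i * (a i : ℝ) ≤ x := by
    refine le_trans ?_ ha
    apply Finset.single_le_sum (f := fun j => γ j * (a j : ℝ)) ?_ (Finset.mem_univ i)
    intro j _
    exact mul_nonneg (hγ j).le (Nat.cast_nonneg _)
  have h2 : (a i : ℝ) ≤ x / γ i := by
    rw [le_div_iff₀ (hγ i)]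
    linarith [mul_comm (γ i) (a i : ℝ)]
  exact Nat.le_floor h2

private lemma count_rec (n : ℕ) (γ : Fin (n + 1) → ℝ) (hγ : ∀ i, 0 < γ i) (x : ℝ) :
    {a : Fin (n + 1) → ℕ | (∑ i, γ i * (a i : ℝ)) ≤ x}.ncard =
      ∑ k ∈ Finset.range (⌊x / γ 0⌋₊ + 1),
        {b : Fin n → ℕ | (∑ i, γ i.succ * (b i : ℝ)) ≤ x - γ 0 * k}.ncard := by
  classical
  have hγ' : ∀ i : Fin n, 0 < γ i.succ := fun i => hγ _
  have hfin := count_finite (n + 1) γ hγ x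
  have hsum : ∀ a : Fin (n + 1) → ℕ,
      (∑ i, γ i * (a i : ℝ)) = γ 0 * (a 0 : ℝ) + ∑ i : Fin n, γ i.succ * (a i.succ : ℝ) :=
    fun a => Fin.sum_univ_succ _
  have htail : ∀ a : Fin (n + 1) → ℕ, 0 ≤ ∑ i : Fin n, γ i.succ * (a i.succ : ℝ) := by
    intro a
    apply Finset.sum_nonneg
    intro i _
    exact mul_nonneg (hγ i.succ).le (Nat.cast_nonneg _)
  rw [Set.ncard_eq_toFinset_card _ hfin]
  rw [Finset.card_eq_sum_card_fiberwise (f := fun a : Fin (n + 1) → ℕ => a 0)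
    (t := Finset.range (⌊x / γ 0⌋₊ + 1)) ?_]
  · apply Finset.sum_congr rfl
    intro k _
    rw [Set.ncard_eq_toFinset_card _ (count_finite n (fun i => γ i.succ) hγ' (x - γ 0 * k))]
    refine Finset.card_bij' (fun a _ => Fin.tail a) (fun b _ => Fin.cons k b) ?_ ?_ ?_ ?_
    · intro a ha
      simp only [Finset.mem_filter, Set.Finite.mem_toFinset, Set.mem_setOf_eq] at ha ⊢
      obtain ⟨ha1, ha2⟩ := ha
      rw [hsum a, ha2] at ha1
      have : ∀ i : Fin n, γ i.succ * ((Fin.tail a i : ℕ) : ℝ) = γ i.succ * (a i.succ : ℝ) := by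
        intro i; rfl
      rw [Finset.sum_congr rfl (fun i _ => this i)]
      linarith
    · intro b hb
      simp only [Set.Finite.mem_toFinset, Set.mem_setOf_eq] at hb
      rw [Finset.mem_filter, Set.Finite.mem_toFinset, Set.mem_setOf_eq]
      refine ⟨?_, by simp⟩
      rw [hsum (Fin.cons k b)]
      simp only [Fin.cons_zero, Fin.cons_succ]
      linarith
    · intro a ha
      simp only [Finset.mem_filter] at ha
      obtain ⟨-, h2⟩ := ha
      subst h2
      exact Fin.cons_self_tail a
    · intro b _
      exact Fin.tail_cons _ _
  · intro a ha
    simp only [Finset.mem_coe, Set.Finite.mem_toFinset, Set.mem_setOf_eq] at ha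
    rw [Finset.mem_coe, Finset.mem_range, Nat.lt_succ_iff]
    apply Nat.le_floor
    rw [le_div_iff₀ (hγ 0)]
    have h1 := htail a
    rw [hsum a] at ha
    linarith [mul_comm (γ 0) ((a 0 : ℕ) : ℝ)]

private lemma count_zero (γ : Fin 0 → ℝ) {t : ℝ} (ht : 0 ≤ t) :
    ({a : Fin 0 → ℕ | (∑ i, γ i * (a i : ℝ)) ≤ t}.ncard : ℝ) = 1 := by
  have h1 : {a : Fin 0 → ℕ | (∑ i, γ i * (a i : ℝ)) ≤ t} = Set.univ := by
    ext a
    simp [ht]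
  rw [h1, Set.ncard_univ, Nat.card_unique]
  norm_num

set_option maxHeartbeats 1000000 in
private lemma aux : ∀ (n : ℕ) (γ : Fin n → ℝ), (∀ i, 0 < γ i) →
    ∃ C : ℝ, 0 ≤ C ∧ ∀ x : ℝ, 0 ≤ x →
      |({a : Fin n → ℕ | (∑ i, γ i * (a i : ℝ)) ≤ x}.ncard : ℝ)
        - x ^ n / ((n.factorial : ℝ) * ∏ i, γ i)| ≤ C * (x + 1) ^ (n - 1) := by
  intro n
  induction n with
  | zero =>
    intro γ hγ
    refine ⟨0, le_refl 0, fun x hx => ?_⟩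
    rw [count_zero γ hx]
    norm_num
  | succ n IH =>
    intro γ hγ
    obtain ⟨C, hC0, hC⟩ := IH (fun i => γ i.succ) (fun i => hγ _)
    have hg : 0 < γ 0 := hγ 0
    set g := γ 0 with hgdef
    set P : ℝ := ∏ i : Fin n, γ i.succ with hPdef
    have hP : 0 < P := Finset.prod_pos fun i _ => hγ _
    have hprod : (∏ i, γ i) = g * P := Fin.prod_univ_succ γ
    have hfac : ((n + 1).factorial : ℝ) = (n + 1) * n.factorial := by
      rw [Nat.factorial_succ]; push_cast; ring
    have hfacpos : (0 : ℝ) < n.factorial := by positivity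
    set C₀ : ℝ := if n = 0 then 0 else C with hC₀def
    have hC₀0 : 0 ≤ C₀ := by
      rw [hC₀def]; split <;> [exact le_refl 0; exact hC0]
    have key : ∀ t : ℝ, 0 ≤ t →
        |({b : Fin n → ℕ | (∑ i, γ i.succ * (b i : ℝ)) ≤ t}.ncard : ℝ)
          - t ^ n / ((n.factorial : ℝ) * P)| ≤ C₀ * (t + 1) ^ (n - 1) := by
      rcases Nat.eq_zero_or_pos n with hn | hn
      · subst hn
        intro t ht
        rw [count_zero _ ht]
        have : P = 1 := by rw [hPdef]; simp
        rw [this]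
        simp [hC₀def]
      · intro t ht
        have : C₀ = C := if_neg (Nat.pos_iff_ne_zero.mp hn)
        rw [this]
        exact hC t ht
    refine ⟨C₀ * (1 / g + 1) + (1 + g ^ n) / ((n.factorial : ℝ) * P), by positivity, ?_⟩
    intro x hx
    set K := ⌊x / g⌋₊ with hK
    have hcast : ({a : Fin (n + 1) → ℕ | (∑ i, γ i * (a i : ℝ)) ≤ x}.ncard : ℝ)
        = ∑ k ∈ Finset.range (K + 1),
            ({b : Fin n → ℕ | (∑ i, γ i.succ * (b i : ℝ)) ≤ x - g * k}.ncard : ℝ) := by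
      rw [count_rec n γ hγ x]
      push_cast
      rfl
    rw [hcast]
    have hKle : (K : ℝ) ≤ x / g := Nat.floor_le (div_nonneg hx hg.le)
    have hKx : g * (K : ℝ) ≤ x := by
      have := (le_div_iff₀ hg).mp hKle
      linarith
    have htk : ∀ k : ℕ, k ≤ K → 0 ≤ x - g * k := by
      intro k hk
      have h1 : (k : ℝ) ≤ K := Nat.cast_le.mpr hk
      nlinarith
    -- first error sum
    have herr1 : ∀ k ∈ Finset.range (K + 1),
        |({b : Fin n → ℕ | (∑ i, γ i.succ * (b i : ℝ)) ≤ x - g * k}.ncard : ℝ)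
          - (x - g * k) ^ n / ((n.factorial : ℝ) * P)| ≤ C₀ * (x + 1) ^ (n - 1) := by
      intro k hk
      have hk' : k ≤ K := Nat.lt_succ_iff.mp (Finset.mem_range.mp hk)
      have h0 := htk k hk'
      refine (key _ h0).trans ?_
      apply mul_le_mul_of_nonneg_left _ hC₀0
      apply pow_le_pow_left₀ (by linarith) (by nlinarith [mul_nonneg hg.le (Nat.cast_nonneg (α := ℝ) k)])
    -- decompose
    have hsplit : (∑ k ∈ Finset.range (K + 1),
            ({b : Fin n → ℕ | (∑ i, γ i.succ * (b i : ℝ)) ≤ x - g * k}.ncard : ℝ))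
          - x ^ (n + 1) / (((n + 1).factorial : ℝ) * ∏ i, γ i)
        = (∑ k ∈ Finset.range (K + 1),
            (({b : Fin n → ℕ | (∑ i, γ i.succ * (b i : ℝ)) ≤ x - g * k}.ncard : ℝ)
              - (x - g * k) ^ n / ((n.factorial : ℝ) * P)))
          + (1 / ((n.factorial : ℝ) * P)) *
            ((∑ k ∈ Finset.range (K + 1), (x - g * k) ^ n) - x ^ (n + 1) / ((n + 1) * g)) := by
      rw [Finset.sum_sub_distrib]
      have h1 : ∑ k ∈ Finset.range (K + 1), (x - g * k) ^ n / ((n.factorial : ℝ) * P)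
          = (∑ k ∈ Finset.range (K + 1), (x - g * k) ^ n) / ((n.factorial : ℝ) * P) := by
        rw [Finset.sum_div]
      rw [h1, hprod, hfac]
      field_simp
      ring
    rw [hsplit]
    have hB := sum_pow_est hg hx n
    have habs : |(∑ k ∈ Finset.range (K + 1),
            (({b : Fin n → ℕ | (∑ i, γ i.succ * (b i : ℝ)) ≤ x - g * k}.ncard : ℝ)
              - (x - g * k) ^ n / ((n.factorial : ℝ) * P)))
          + (1 / ((n.factorial : ℝ) * P)) *
            ((∑ k ∈ Finset.range (K + 1), (x - g * k) ^ n) - x ^ (n + 1) / ((n + 1) * g))|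
        ≤ (K + 1) * (C₀ * (x + 1) ^ (n - 1))
          + (1 / ((n.factorial : ℝ) * P)) * (x ^ n + g ^ n) := by
      refine (abs_add_le _ _).trans ?_
      gcongr
      · refine (Finset.abs_sum_le_sum_abs _ _).trans ?_
        refine (Finset.sum_le_sum herr1).trans ?_
        rw [Finset.sum_const, Finset.card_range]
        push_cast
        apply le_of_eq
        ring
      · rw [abs_mul]
        have h1 : |1 / ((n.factorial : ℝ) * P)| = 1 / ((n.factorial : ℝ) * P) := by
          rw [abs_of_pos]; positivity
        rw [h1]
        exact mul_le_mul_of_nonneg_left hB (by positivity)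
    refine habs.trans ?_
    -- final bookkeeping
    have hxp1 : (1 : ℝ) ≤ x + 1 := by linarith
    have hgoal1 : ((K : ℝ) + 1) * (C₀ * (x + 1) ^ (n - 1))
        ≤ C₀ * (1 / g + 1) * (x + 1) ^ n := by
      rcases Nat.eq_zero_or_pos n with hn | hn
      · have : C₀ = 0 := by rw [hC₀def, if_pos hn]
        rw [this]
        simp [pow_nonneg (by linarith : (0:ℝ) ≤ x + 1)]
      · have hK1 : (K : ℝ) + 1 ≤ (1 / g + 1) * (x + 1) := by
          have h2 : x / g = x * (1 / g) := by ring
          rw [h2] at hKle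
          nlinarith [hKle, hx, le_of_lt (one_div_pos.mpr hg)]
        have hpow : (x + 1) ^ (n - 1) * (x + 1) = (x + 1) ^ n := by
          rw [← pow_succ]
          congr 1
          omega
        calc ((K : ℝ) + 1) * (C₀ * (x + 1) ^ (n - 1))
            ≤ ((1 / g + 1) * (x + 1)) * (C₀ * (x + 1) ^ (n - 1)) := by
              apply mul_le_mul_of_nonneg_right hK1
              positivity
          _ = C₀ * (1 / g + 1) * ((x + 1) ^ (n - 1) * (x + 1)) := by ring
          _ = C₀ * (1 / g + 1) * (x + 1) ^ n := by rw [hpow]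
    have hgoal2 : (1 / ((n.factorial : ℝ) * P)) * (x ^ n + g ^ n)
        ≤ (1 + g ^ n) / ((n.factorial : ℝ) * P) * (x + 1) ^ n := by
      have h1 : x ^ n + g ^ n ≤ (1 + g ^ n) * (x + 1) ^ n := by
        have hx1 : x ^ n ≤ (x + 1) ^ n := pow_le_pow_left₀ hx (by linarith) n
        have hg1 : (1 : ℝ) ≤ (x + 1) ^ n := one_le_pow₀ hxp1
        nlinarith [pow_nonneg hg.le n]
      calc (1 / ((n.factorial : ℝ) * P)) * (x ^ n + g ^ n)
          ≤ (1 / ((n.factorial : ℝ) * P)) * ((1 + g ^ n) * (x + 1) ^ n) := by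
            apply mul_le_mul_of_nonneg_left h1
            positivity
        _ = (1 + g ^ n) / ((n.factorial : ℝ) * P) * (x + 1) ^ n := by ring
    rw [Nat.add_sub_cancel]
    linarith [hgoal1, hgoal2]

/-- **Weighted lattice point count, leading term.**
For positive real weights `γ₁, …, γₙ`, the number of lattice points
`(a₁, …, aₙ) ∈ ℤ₊ⁿ` with `∑ γᵢ aᵢ ≤ x` equals `xⁿ/(n!·γ₁⋯γₙ) + O(x^{n-1})`. -/
theorem weighted_lattice_count_leading (n : ℕ) (γ : Fin n → ℝ) (hγ : ∀ i, 0 < γ i) :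
    ∃ C : ℝ, ∀ x : ℝ, 1 ≤ x →
      |((Set.ncard {a : Fin n → ℕ | (∑ i, γ i * (a i : ℝ)) ≤ x} : ℕ) : ℝ)
        - x ^ n / ((n.factorial : ℝ) * ∏ i, γ i)| ≤ C * x ^ (n - 1) := by
  obtain ⟨C, hC0, hC⟩ := aux n γ hγ
  refine ⟨C * 2 ^ (n - 1), fun x hx => ?_⟩
  refine (hC x (by linarith)).trans ?_
  have h1 : (x + 1) ^ (n - 1) ≤ (2 * x) ^ (n - 1) :=
    pow_le_pow_left₀ (by linarith) (by linarith) _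
  calc C * (x + 1) ^ (n - 1) ≤ C * (2 * x) ^ (n - 1) :=
        mul_le_mul_of_nonneg_left h1 hC0
    _ = C * 2 ^ (n - 1) * x ^ (n - 1) := by rw [mul_pow]; ring
end

section
/- Let n ≥ 2, γ > 0, and for x > 0 set F(x) = Σ_{k=0}^{⌊x/γ⌋} (x−γk)^{n-1} − xⁿ/(nγ). Then F(x) = x^{n-1}/2 + r(x) where r(x) = O(x^{n-1}) and lim_{T→∞} (1/Tⁿ)·∫₀ᵀ r(x) dx = 0. -/
open Finset

private lemma intervalIntegral_integral_pow_local {a b : ℝ} (n : ℕ) :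
    ∫ x in a..b, x ^ n = (b ^ (n + 1) - a ^ (n + 1)) / (n + 1) := integral_pow n

private lemma intervalIntegral_integral_div_local {a b r : ℝ} (f : ℝ → ℝ) :
    ∫ x in a..b, f x / r = (∫ x in a..b, f x) / r := intervalIntegral.integral_div r f


-- geometric sum bounds
lemma sum_geom_le {u v : ℝ} (hv : 0 ≤ v) (hvu : v ≤ u) (N : ℕ) :
    ∑ i ∈ range N, u ^ i * v ^ (N - 1 - i) ≤ (N : ℝ) * u ^ (N - 1) := by
  have hu : 0 ≤ u := le_trans hv hvu
  calc ∑ i ∈ range N, u ^ i * v ^ (N - 1 - i)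
      ≤ ∑ i ∈ range N, u ^ (N - 1) := by
        apply Finset.sum_le_sum
        intro i hi
        have hiN : i + (N - 1 - i) = N - 1 := by
          have := Finset.mem_range.mp hi; omega
        calc u ^ i * v ^ (N - 1 - i) ≤ u ^ i * u ^ (N - 1 - i) := by
              apply mul_le_mul_of_nonneg_left (pow_le_pow_left₀ hv hvu _)
              positivity
          _ = u ^ (N - 1) := by rw [← pow_add, hiN]
    _ = (N : ℝ) * u ^ (N - 1) := by simp [mul_comm]

lemma le_sum_geom {u v : ℝ} (hv : 0 ≤ v) (hvu : v ≤ u) (N : ℕ) :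
    (N : ℝ) * v ^ (N - 1) ≤ ∑ i ∈ range N, u ^ i * v ^ (N - 1 - i) := by
  have hu : 0 ≤ u := le_trans hv hvu
  calc (N : ℝ) * v ^ (N - 1) = ∑ i ∈ range N, v ^ (N - 1) := by simp [mul_comm]
    _ ≤ ∑ i ∈ range N, u ^ i * v ^ (N - 1 - i) := by
        apply Finset.sum_le_sum
        intro i hi
        have hiN : i + (N - 1 - i) = N - 1 := by
          have := Finset.mem_range.mp hi; omega
        calc v ^ (N - 1) = v ^ i * v ^ (N - 1 - i) := by rw [← pow_add, hiN]
          _ ≤ u ^ i * v ^ (N - 1 - i) := by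
              apply mul_le_mul_of_nonneg_right (pow_le_pow_left₀ hv hvu _)
              positivity

lemma pow_sub_pow_le {u v : ℝ} (hv : 0 ≤ v) (hvu : v ≤ u) (N : ℕ) :
    u ^ N - v ^ N ≤ (N : ℝ) * (u - v) * u ^ (N - 1) := by
  rw [← geom_sum₂_mul u v N]
  have h := sum_geom_le hv hvu N
  have huv : 0 ≤ u - v := sub_nonneg.mpr hvu
  calc (∑ i ∈ range N, u ^ i * v ^ (N - 1 - i)) * (u - v)
      ≤ ((N : ℝ) * u ^ (N - 1)) * (u - v) := mul_le_mul_of_nonneg_right h huv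
    _ = (N : ℝ) * (u - v) * u ^ (N - 1) := by ring

lemma le_pow_sub_pow {u v : ℝ} (hv : 0 ≤ v) (hvu : v ≤ u) (N : ℕ) :
    (N : ℝ) * (u - v) * v ^ (N - 1) ≤ u ^ N - v ^ N := by
  rw [← geom_sum₂_mul u v N]
  have h := le_sum_geom hv hvu N
  have huv : 0 ≤ u - v := sub_nonneg.mpr hvu
  calc (N : ℝ) * (u - v) * v ^ (N - 1) = ((N : ℝ) * v ^ (N - 1)) * (u - v) := by ring
    _ ≤ (∑ i ∈ range N, u ^ i * v ^ (N - 1 - i)) * (u - v) := mul_le_mul_of_nonneg_right h huv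

lemma pair_sum (u v : ℝ) (N : ℕ) :
    ∑ i ∈ range (N+1), (u^i - v^i) * (u^(N-i) - v^(N-i))
      = ((N:ℝ)+1) * (u^N + v^N) - 2 * ∑ i ∈ range (N+1), u^i * v^(N-i) := by
  have hrefl : ∑ i ∈ range (N+1), v^i * u^(N-i) = ∑ i ∈ range (N+1), u^i * v^(N-i) := by
    rw [← Finset.sum_range_reflect (fun i => u^i * v^(N-i)) (N+1)]
    apply Finset.sum_congr rfl
    intro i hi
    have hi' : i ≤ N := by have := Finset.mem_range.mp hi; omega
    have h1 : N + 1 - 1 - i = N - i := by omega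
    have h2 : N - (N - i) = i := by omega
    rw [h1, h2, mul_comm]
  have h1 : ∀ i ∈ range (N+1),
      (u^i - v^i) * (u^(N-i) - v^(N-i)) = u^N + v^N - u^i * v^(N-i) - v^i * u^(N-i) := by
    intro i hi
    have hiN : i + (N - i) = N := by have := Finset.mem_range.mp hi; omega
    have hu : u^i * u^(N-i) = u^N := by rw [← pow_add, hiN]
    have hv : v^i * v^(N-i) = v^N := by rw [← pow_add, hiN]
    linear_combination hu + hv
  rw [Finset.sum_congr rfl h1]
  rw [Finset.sum_sub_distrib, Finset.sum_sub_distrib, hrefl, Finset.sum_const, Finset.card_range]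
  push_cast
  ring

lemma trapezoid_bound {u v : ℝ} (hv : 0 ≤ v) (hvu : v ≤ u) (N : ℕ) (hN : 2 ≤ N) :
    0 ≤ (u - v) * (u^N + v^N) / 2 - (u^(N+1) - v^(N+1)) / ((N:ℝ)+1) ∧
    (u - v) * (u^N + v^N) / 2 - (u^(N+1) - v^(N+1)) / ((N:ℝ)+1)
      ≤ (u-v)^3 * (N:ℝ)^2 * u^(N-2) := by
  have hu : 0 ≤ u := le_trans hv hvu
  have huv : 0 ≤ u - v := sub_nonneg.mpr hvu
  have hN1 : ((N:ℝ)+1) ≠ 0 := by positivity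
  have hgeom : u^(N+1) - v^(N+1) = (∑ i ∈ range (N+1), u^i * v^(N-i)) * (u-v) := by
    have h := geom_sum₂_mul u v (N+1)
    simp only [Nat.add_sub_cancel] at h
    exact h.symm
  have key : (u - v) * (u^N + v^N) / 2 - (u^(N+1) - v^(N+1)) / ((N:ℝ)+1)
      = (u - v) * (∑ i ∈ range (N+1), (u^i - v^i) * (u^(N-i) - v^(N-i))) / (2*((N:ℝ)+1)) := by
    rw [pair_sum, hgeom]
    field_simp
  have hsum0 : 0 ≤ ∑ i ∈ range (N+1), (u^i - v^i) * (u^(N-i) - v^(N-i)) := by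
    apply Finset.sum_nonneg
    intro i _
    exact mul_nonneg (sub_nonneg.mpr (pow_le_pow_left₀ hv hvu _))
      (sub_nonneg.mpr (pow_le_pow_left₀ hv hvu _))
  constructor
  · rw [key]
    apply div_nonneg (mul_nonneg huv hsum0) (by positivity)
  · have hterm : ∀ i ∈ range (N+1),
        (u^i - v^i) * (u^(N-i) - v^(N-i)) ≤ (u-v)^2 * (N:ℝ)^2 * u^(N-2) := by
      intro i hi
      have hi' : i ≤ N := by have := Finset.mem_range.mp hi; omega
      rcases Nat.eq_zero_or_pos i with h0 | hpos
      · subst h0; simp only [pow_zero, sub_self, zero_mul]; positivity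
      rcases eq_or_lt_of_le hi' with hiN | hlt
      · subst hiN; simp only [Nat.sub_self, pow_zero, sub_self, mul_zero]; positivity
      · have b1 := pow_sub_pow_le hv hvu i
        have b2 := pow_sub_pow_le hv hvu (N-i)
        have p2 : 0 ≤ u^(N-i) - v^(N-i) := sub_nonneg.mpr (pow_le_pow_left₀ hv hvu _)
        have hpow : u^(i-1) * u^(N-i-1) = u^(N-2) := by
          rw [← pow_add]; congr 1; omega
        have c1 : (i:ℝ) ≤ (N:ℝ) := by exact_mod_cast hi'
        have c2 : ((N-i:ℕ):ℝ) ≤ (N:ℝ) := by exact_mod_cast Nat.sub_le N i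
        have c1' : (0:ℝ) ≤ (i:ℝ) := by positivity
        have c2' : (0:ℝ) ≤ ((N-i:ℕ):ℝ) := by positivity
        calc (u^i - v^i) * (u^(N-i) - v^(N-i))
            ≤ ((i:ℝ)*(u-v)*u^(i-1)) * (((N-i:ℕ):ℝ)*(u-v)*u^(N-i-1)) := by
              apply mul_le_mul b1 b2 p2 (by positivity)
          _ = (i:ℝ)*((N-i:ℕ):ℝ) * ((u-v)^2 * (u^(i-1) * u^(N-i-1))) := by ring
          _ = (i:ℝ)*((N-i:ℕ):ℝ) * ((u-v)^2 * u^(N-2)) := by rw [hpow]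
          _ ≤ (N:ℝ)*(N:ℝ) * ((u-v)^2 * u^(N-2)) := by
              apply mul_le_mul_of_nonneg_right _ (by positivity)
              exact mul_le_mul c1 c2 c2' (by positivity)
          _ = (u-v)^2 * (N:ℝ)^2 * u^(N-2) := by ring
    have hsumle : ∑ i ∈ range (N+1), (u^i - v^i) * (u^(N-i) - v^(N-i))
        ≤ ((N:ℝ)+1) * ((u-v)^2 * (N:ℝ)^2 * u^(N-2)) := by
      calc ∑ i ∈ range (N+1), (u^i - v^i) * (u^(N-i) - v^(N-i))
          ≤ ∑ _i ∈ range (N+1), (u-v)^2 * (N:ℝ)^2 * u^(N-2) := Finset.sum_le_sum hterm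
        _ = ((N:ℝ)+1) * ((u-v)^2 * (N:ℝ)^2 * u^(N-2)) := by
            rw [Finset.sum_const, Finset.card_range]; push_cast; ring
    rw [key]
    have step1 : (u - v) * (∑ i ∈ range (N+1), (u^i - v^i) * (u^(N-i) - v^(N-i))) / (2*((N:ℝ)+1))
        ≤ (u - v) * (((N:ℝ)+1) * ((u-v)^2 * (N:ℝ)^2 * u^(N-2))) / (2*((N:ℝ)+1)) := by
      gcongr
    have heq : (u - v) * (((N:ℝ)+1) * ((u-v)^2 * (N:ℝ)^2 * u^(N-2))) / (2*((N:ℝ)+1))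
        = ((u-v)^3 * (N:ℝ)^2 * u^(N-2)) / 2 := by
      field_simp
    have hhalf : ((u-v)^3 * (N:ℝ)^2 * u^(N-2)) / 2 ≤ (u-v)^3 * (N:ℝ)^2 * u^(N-2) := by
      have : 0 ≤ (u-v)^3 * (N:ℝ)^2 * u^(N-2) := by positivity
      linarith
    linarith [step1, heq.le, heq.ge]

lemma floor_facts {γ : ℝ} (hγ : 0 < γ) {x : ℝ} (hx : 0 < x) :
    γ * ((⌊x/γ⌋.toNat : ℕ) : ℝ) ≤ x ∧ x < γ * (((⌊x/γ⌋.toNat : ℕ) : ℝ) + 1) := by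
  have h0 : 0 ≤ ⌊x/γ⌋ := Int.floor_nonneg.mpr (by positivity)
  have hc : ((⌊x/γ⌋.toNat : ℕ) : ℝ) = ((⌊x/γ⌋ : ℤ) : ℝ) := by exact_mod_cast Int.toNat_of_nonneg h0
  constructor
  · rw [hc]
    have h := Int.floor_le (x/γ)
    calc γ * ((⌊x/γ⌋ : ℤ) : ℝ) ≤ γ * (x/γ) := mul_le_mul_of_nonneg_left h hγ.le
      _ = x := by field_simp
  · rw [hc]
    have h := Int.lt_floor_add_one (x/γ)
    calc x = γ * (x/γ) := by field_simp
      _ < γ * (((⌊x/γ⌋ : ℤ) : ℝ) + 1) := by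
          apply mul_lt_mul_of_pos_left h hγ

set_option maxHeartbeats 1000000 in
lemma crude_bound (n : ℕ) (hn : 2 ≤ n) {γ : ℝ} (hγ : 0 < γ) {x : ℝ} (hx : 1 ≤ x) :
    |(∑ k ∈ Finset.range ((⌊x / γ⌋).toNat + 1), (x - γ * (k : ℝ)) ^ (n - 1)) - x ^ n / (↑n * γ)|
      ≤ (1 + γ^(n-1)) * x ^ (n-1) := by
  have hx0 : (0:ℝ) < x := lt_of_lt_of_le one_pos hx
  obtain ⟨hK1, hK2⟩ := floor_facts hγ hx0
  set K := (⌊x / γ⌋).toNat with hKdef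
  set u : ℕ → ℝ := fun k => x - γ * k with hudef
  have hu0 : u 0 = x := by simp [hudef]
  have huK : 0 ≤ u K := by simp only [hudef]; linarith
  have huKγ : u K < γ := by simp only [hudef]; push_cast; nlinarith
  have hstep : ∀ k, u k - u (k+1) = γ := by intro k; simp only [hudef]; push_cast; ring
  have hmono : ∀ k ∈ Finset.range K, 0 ≤ u (k+1) ∧ u (k+1) ≤ u k := by
    intro k hk
    have hkK : k + 1 ≤ K := Finset.mem_range.mp hk
    constructor
    · simp only [hudef]
      have : γ * ((k:ℝ)+1) ≤ γ * K := by
        apply mul_le_mul_of_nonneg_left _ hγ.le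
        exact_mod_cast hkK
      push_cast at this ⊢; linarith
    · have := hstep k; linarith
  set S := ∑ k ∈ Finset.range (K+1), (u k) ^ (n-1) with hSdef
  have hSeq : (∑ k ∈ Finset.range ((⌊x / γ⌋).toNat + 1), (x - γ * (k : ℝ)) ^ (n - 1)) = S := rfl
  -- telescoping sum of differences
  have htel : ∑ k ∈ Finset.range K, ((u k)^n - (u (k+1))^n) = x^n - (u K)^n := by
    rw [Finset.sum_range_sub' (fun k => (u k)^n) K, hu0]
  have hleft : ∑ k ∈ Finset.range K, (u (k+1))^(n-1) = S - x^(n-1) := by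
    have := Finset.sum_range_succ' (fun k => (u k)^(n-1)) K
    simp only [← hSdef] at this
    rw [hu0] at this
    linarith [this]
  have hright : ∑ k ∈ Finset.range K, (u k)^(n-1) = S - (u K)^(n-1) := by
    have := Finset.sum_range_succ (fun k => (u k)^(n-1)) K
    simp only [← hSdef] at this
    linarith [this]
  have hlb : (n:ℝ) * γ * (S - x^(n-1)) ≤ x^n - (u K)^n := by
    rw [← htel]
    calc (n:ℝ) * γ * (S - x^(n-1)) = ∑ k ∈ Finset.range K, (n:ℝ) * γ * (u (k+1))^(n-1) := by
          rw [← Finset.mul_sum, hleft]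
      _ ≤ ∑ k ∈ Finset.range K, ((u k)^n - (u (k+1))^n) := by
          apply Finset.sum_le_sum
          intro k hk
          obtain ⟨h1, h2⟩ := hmono k hk
          have := le_pow_sub_pow h1 h2 n
          rw [hstep k] at this
          linarith
  have hub : x^n - (u K)^n ≤ (n:ℝ) * γ * (S - (u K)^(n-1)) := by
    rw [← htel]
    calc ∑ k ∈ Finset.range K, ((u k)^n - (u (k+1))^n)
        ≤ ∑ k ∈ Finset.range K, (n:ℝ) * γ * (u k)^(n-1) := by
          apply Finset.sum_le_sum
          intro k hk
          obtain ⟨h1, h2⟩ := hmono k hk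
          have := pow_sub_pow_le h1 h2 n
          rw [hstep k] at this
          linarith
      _ = (n:ℝ) * γ * (S - (u K)^(n-1)) := by rw [← Finset.mul_sum, hright]
  -- conclude
  have hnγ : (0:ℝ) < (n:ℝ) * γ := by positivity
  have hdiv : ((n:ℝ) * γ) * (x ^ n / ((n:ℝ) * γ)) = x ^ n := by field_simp
  have huKn : (u K)^n ≤ γ^n := pow_le_pow_left₀ huK huKγ.le n
  have huKn' : 0 ≤ (u K)^n := by positivity
  have huKn1 : 0 ≤ (u K)^(n-1) := by positivity
  have hγn : γ^n = γ^(n-1) * γ := by rw [← pow_succ]; congr 1; omega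
  have hn1 : (1:ℝ) ≤ (n:ℝ) := by exact_mod_cast le_trans one_le_two hn
  have hA1 : ((n:ℝ)*γ) * (S - x^n/((n:ℝ)*γ)) ≤ ((n:ℝ)*γ) * x^(n-1) := by
    rw [mul_sub, hdiv]; nlinarith
  have hA2 : -(((n:ℝ)*γ) * γ^(n-1)) ≤ ((n:ℝ)*γ) * (S - x^n/((n:ℝ)*γ)) := by
    rw [mul_sub, hdiv]
    nlinarith
  have hB1 : S - x^n/((n:ℝ)*γ) ≤ x^(n-1) := le_of_mul_le_mul_left hA1 hnγ
  have hB2 : -(γ^(n-1)) ≤ S - x^n/((n:ℝ)*γ) := by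
    have := le_of_mul_le_mul_left (by linarith [hA2] : ((n:ℝ)*γ) * (-(γ^(n-1))) ≤ ((n:ℝ)*γ) * (S - x^n/((n:ℝ)*γ))) hnγ
    linarith
  clear hSeq
  have hxpow : (1:ℝ) ≤ x^(n-1) := one_le_pow₀ hx
  have hγ1 : 0 ≤ γ^(n-1) := by positivity
  rw [abs_le]
  constructor <;> nlinarith

set_option maxHeartbeats 1000000 in
lemma sum_trapezoid_bound (n : ℕ) (hn : 2 ≤ n) {γ : ℝ} (hγ : 0 < γ) {T : ℝ} (hT : 1 ≤ T) :
    |γ * (∑ k ∈ Finset.range ((⌊T / γ⌋).toNat + 1), (T - γ * (k : ℝ)) ^ n)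
       - γ * T^n / 2 - T^(n+1) / ((n:ℝ)+1)|
      ≤ (γ^2 * (n:ℝ)^2 + 2 * γ^(n+1)) * T^(n-1) := by
  have hT0 : (0:ℝ) < T := lt_of_lt_of_le one_pos hT
  obtain ⟨hK1, hK2⟩ := floor_facts hγ hT0
  set K := (⌊T / γ⌋).toNat with hKdef
  set u : ℕ → ℝ := fun k => T - γ * k with hudef
  have hu0 : u 0 = T := by simp [hudef]
  have huK : 0 ≤ u K := by simp only [hudef]; linarith
  have huKγ : u K ≤ γ := by simp only [hudef]; push_cast; nlinarith
  have hstep : ∀ k, u k - u (k+1) = γ := by intro k; simp only [hudef]; push_cast; ring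
  have hukT : ∀ k, u k ≤ T := by
    intro k; simp only [hudef]
    have : 0 ≤ γ * (k:ℝ) := by positivity
    linarith
  have hmono : ∀ k ∈ Finset.range K, 0 ≤ u (k+1) ∧ u (k+1) ≤ u k := by
    intro k hk
    have hkK : k + 1 ≤ K := Finset.mem_range.mp hk
    constructor
    · simp only [hudef]
      have : γ * ((k:ℝ)+1) ≤ γ * K := by
        apply mul_le_mul_of_nonneg_left _ hγ.le
        exact_mod_cast hkK
      push_cast at this ⊢; linarith
    · have := hstep k; linarith
  set S := ∑ k ∈ Finset.range (K+1), (u k) ^ n with hSdef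
  set A := ∑ k ∈ Finset.range K,
      (γ * ((u k)^n + (u (k+1))^n) / 2 - ((u k)^(n+1) - (u (k+1))^(n+1)) / ((n:ℝ)+1)) with hAdef
  have hterm : ∀ k ∈ Finset.range K,
      0 ≤ γ * ((u k)^n + (u (k+1))^n) / 2 - ((u k)^(n+1) - (u (k+1))^(n+1)) / ((n:ℝ)+1) ∧
      γ * ((u k)^n + (u (k+1))^n) / 2 - ((u k)^(n+1) - (u (k+1))^(n+1)) / ((n:ℝ)+1)
        ≤ γ^3 * (n:ℝ)^2 * T^(n-2) := by
    intro k hk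
    obtain ⟨h1, h2⟩ := hmono k hk
    obtain ⟨hlo, hhi⟩ := trapezoid_bound h1 h2 n hn
    rw [hstep k] at hlo hhi
    refine ⟨hlo, le_trans hhi ?_⟩
    have hu0k : 0 ≤ u k := le_trans h1 h2
    have : (u k)^(n-2) ≤ T^(n-2) := pow_le_pow_left₀ hu0k (hukT k) _
    have hγ3 : 0 ≤ γ^3 * (n:ℝ)^2 := by positivity
    calc γ^3 * (n:ℝ)^2 * (u k)^(n-2) ≤ γ^3 * (n:ℝ)^2 * T^(n-2) := by nlinarith
      _ = γ^3 * (n:ℝ)^2 * T^(n-2) := rfl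
  have hA0 : 0 ≤ A := Finset.sum_nonneg (fun k hk => (hterm k hk).1)
  have hAub : A ≤ (K:ℝ) * (γ^3 * (n:ℝ)^2 * T^(n-2)) := by
    calc A ≤ ∑ _k ∈ Finset.range K, γ^3 * (n:ℝ)^2 * T^(n-2) :=
          Finset.sum_le_sum (fun k hk => (hterm k hk).2)
      _ = (K:ℝ) * (γ^3 * (n:ℝ)^2 * T^(n-2)) := by
          rw [Finset.sum_const, Finset.card_range, nsmul_eq_mul]
  have hKT : (K:ℝ) ≤ T / γ := by rw [le_div_iff₀ hγ]; linarith [hK1]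
  have hpowT : T^(n-1) = T^(n-2) * T := by rw [← pow_succ]; congr 1; omega
  have hAub2 : A ≤ γ^2 * (n:ℝ)^2 * T^(n-1) := by
    have h1 : (K:ℝ) * (γ^3 * (n:ℝ)^2 * T^(n-2)) ≤ (T/γ) * (γ^3 * (n:ℝ)^2 * T^(n-2)) := by
      apply mul_le_mul_of_nonneg_right hKT (by positivity)
    have h2 : (T/γ) * (γ^3 * (n:ℝ)^2 * T^(n-2)) = γ^2 * (n:ℝ)^2 * (T^(n-2) * T) := by
      field_simp
    rw [hpowT]; linarith
  -- expression for A
  have e1 : ∑ k ∈ Finset.range K, (u k)^n = S - (u K)^n := by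
    have := Finset.sum_range_succ (fun k => (u k)^n) K
    simp only [← hSdef] at this; linarith
  have e2 : ∑ k ∈ Finset.range K, (u (k+1))^n = S - T^n := by
    have := Finset.sum_range_succ' (fun k => (u k)^n) K
    simp only [← hSdef] at this; rw [hu0] at this; linarith
  have etel : ∑ k ∈ Finset.range K, ((u k)^(n+1) - (u (k+1))^(n+1)) = T^(n+1) - (u K)^(n+1) := by
    rw [Finset.sum_range_sub' (fun k => (u k)^(n+1)) K, hu0]
  have hA_eq : A = γ * S - γ * T^n / 2 - γ * (u K)^n / 2
      - (T^(n+1) - (u K)^(n+1)) / ((n:ℝ)+1) := by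
    rw [hAdef, Finset.sum_sub_distrib]
    have hfirst : ∑ k ∈ Finset.range K, γ * ((u k)^n + (u (k+1))^n) / 2
        = γ * ((S - (u K)^n) + (S - T^n)) / 2 := by
      rw [← e1, ← e2, ← Finset.sum_add_distrib, Finset.mul_sum, Finset.sum_div]
    have hsecond : ∑ k ∈ Finset.range K, ((u k)^(n+1) - (u (k+1))^(n+1)) / ((n:ℝ)+1)
        = (T^(n+1) - (u K)^(n+1)) / ((n:ℝ)+1) := by
      rw [← Finset.sum_div, etel]
    rw [hfirst, hsecond]; ring
  -- conclude
  have huKn : (u K)^n ≤ γ^n := pow_le_pow_left₀ huK huKγ n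
  have huKn1 : (u K)^(n+1) ≤ γ^(n+1) := pow_le_pow_left₀ huK huKγ (n+1)
  have huKn0 : 0 ≤ (u K)^n := by positivity
  have huKn10 : 0 ≤ (u K)^(n+1) := by positivity
  have hγn1 : γ^(n+1) = γ * γ^n := by rw [pow_succ]; ring
  have hdiv1 : (u K)^(n+1) / ((n:ℝ)+1) ≤ γ^(n+1) := by
    have hn1 : (1:ℝ) ≤ (n:ℝ)+1 := by have := Nat.cast_nonneg (α:=ℝ) n; linarith
    calc (u K)^(n+1) / ((n:ℝ)+1) ≤ (u K)^(n+1) / 1 := by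
          apply div_le_div_of_nonneg_left huKn10 one_pos hn1
      _ = (u K)^(n+1) := by ring
      _ ≤ γ^(n+1) := huKn1
  have hdiv0 : 0 ≤ (u K)^(n+1) / ((n:ℝ)+1) := by positivity
  have hD : γ * S - γ * T^n / 2 - T^(n+1) / ((n:ℝ)+1)
      = A + γ * (u K)^n / 2 - (u K)^(n+1) / ((n:ℝ)+1) := by
    rw [hA_eq]; ring
  have hTpow1 : (1:ℝ) ≤ T^(n-1) := one_le_pow₀ hT
  have hγpos : 0 ≤ γ^(n+1) := by positivity
  rw [hD, abs_le]
  constructor <;> nlinarith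

set_option maxHeartbeats 1000000 in
lemma integral_r (n : ℕ) (hn : 2 ≤ n) {γ : ℝ} (hγ : 0 < γ) {T : ℝ} (hT : 0 < T) :
    ∫ x in (0:ℝ)..T, ((∑ k ∈ Finset.range ((⌊x / γ⌋).toNat + 1), (x - γ * (k : ℝ)) ^ (n - 1))
        - x ^ n / (↑n * γ) - x ^ (n-1) / 2)
      = (∑ k ∈ Finset.range ((⌊T / γ⌋).toNat + 1), (T - γ * (k : ℝ)) ^ n) / n
        - T^(n+1) / (((n:ℝ)+1) * ((n:ℝ)*γ)) - T^n / (2*(n:ℝ)) := by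
  obtain ⟨hT1, hT2⟩ := floor_facts hγ hT
  set K := (⌊T / γ⌋).toNat with hK
  have hn1 : n - 1 + 1 = n := by omega
  have hn1' : n - 1 ≠ 0 := by omega
  have hn0 : n ≠ 0 := by omega
  set g : ℕ → ℝ → ℝ := fun k x => (max (x - γ*k) 0)^(n-1) with hg
  have hgcont : ∀ k, Continuous (g k) :=
    fun k => ((continuous_id.sub continuous_const).max continuous_const).pow _
  have heq : Set.EqOn
      (fun x => (∑ k ∈ Finset.range ((⌊x / γ⌋).toNat + 1), (x - γ * (k:ℝ)) ^ (n - 1))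
        - x ^ n / (↑n * γ) - x ^ (n-1) / 2)
      (fun x => (∑ k ∈ Finset.range (K + 1), g k x) - x ^ n / (↑n * γ) - x ^ (n-1) / 2)
      (Set.uIcc 0 T) := by
    intro x hx
    rw [Set.uIcc_of_le hT.le] at hx
    obtain ⟨hx0, hxT⟩ := hx
    have hsum : (∑ k ∈ Finset.range ((⌊x / γ⌋).toNat + 1), (x - γ * (k:ℝ)) ^ (n - 1))
        = ∑ k ∈ Finset.range (K + 1), g k x := by
      rcases eq_or_lt_of_le hx0 with h0 | hpos
      · rw [← h0]
        have hfl : (⌊(0:ℝ) / γ⌋).toNat = 0 := by simp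
        rw [hfl]
        rw [Finset.sum_eq_zero, Finset.sum_eq_zero]
        · intro k _
          have hneg : (0:ℝ) - γ * k ≤ 0 := by
            have : (0:ℝ) ≤ γ * k := by positivity
            linarith
          simp only [hg]
          rw [max_eq_right hneg, zero_pow hn1']
        · intro k hk
          simp only [Finset.mem_range] at hk
          have hk0 : k = 0 := by omega
          subst hk0
          simp [zero_pow hn1']
      · obtain ⟨hx1, hx2⟩ := floor_facts hγ hpos
        set Kx := (⌊x / γ⌋).toNat with hKx
        have hKxK : Kx ≤ K := by
          apply Int.toNat_le_toNat
          apply Int.floor_le_floor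
          gcongr
        have h1 : (∑ k ∈ Finset.range (Kx + 1), (x - γ * (k:ℝ)) ^ (n - 1))
            = ∑ k ∈ Finset.range (Kx + 1), g k x := by
          apply Finset.sum_congr rfl
          intro k hk
          have hk' : (k:ℝ) ≤ (Kx:ℝ) := by exact_mod_cast Nat.lt_succ_iff.mp (Finset.mem_range.mp hk)
          have : 0 ≤ x - γ * k := by nlinarith
          simp only [hg]
          rw [max_eq_left this]
        rw [h1]
        apply Finset.sum_subset
        · exact Finset.range_subset_range.mpr (by omega)
        · intro k hk hnk
          simp only [Finset.mem_range, not_lt] at hnk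
          have hk' : (Kx:ℝ) + 1 ≤ (k:ℝ) := by exact_mod_cast hnk
          have hneg : x - γ * k ≤ 0 := by nlinarith
          simp only [hg]
          rw [max_eq_right hneg, zero_pow hn1']
    simp only [hsum]
  rw [intervalIntegral.integral_congr heq]
  have hint1 : IntervalIntegrable (fun x => ∑ k ∈ Finset.range (K+1), g k x)
      MeasureTheory.volume 0 T :=
    (continuous_finset_sum _ (fun k _ => hgcont k)).intervalIntegrable _ _
  have hint2 : IntervalIntegrable (fun x : ℝ => x ^ n / (↑n * γ)) MeasureTheory.volume 0 T :=
    ((continuous_pow n).div_const _).intervalIntegrable _ _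
  have hint3 : IntervalIntegrable (fun x : ℝ => x ^ (n-1) / 2) MeasureTheory.volume 0 T :=
    ((continuous_pow (n-1)).div_const _).intervalIntegrable _ _
  rw [intervalIntegral.integral_sub (hint1.sub hint2) hint3,
    intervalIntegral.integral_sub hint1 hint2,
    intervalIntegral.integral_finset_sum (fun k _ => (hgcont k).intervalIntegrable _ _)]
  have hgk : ∀ k ∈ Finset.range (K+1), (∫ x in (0:ℝ)..T, g k x) = (T - γ*k)^n / n := by
    intro k hk
    have hk' : (k:ℝ) ≤ (K:ℝ) := by exact_mod_cast Nat.lt_succ_iff.mp (Finset.mem_range.mp hk)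
    have hcT : γ * k ≤ T := by nlinarith
    have hc0 : (0:ℝ) ≤ γ * k := by positivity
    have hz : (∫ x in (0:ℝ)..(γ*k), g k x) = 0 := by
      rw [intervalIntegral.integral_congr (g := fun _ => (0:ℝ)) ?_]
      · simp
      · intro x hx
        rw [Set.uIcc_of_le hc0] at hx
        have hneg : x - γ*k ≤ 0 := by linarith [hx.2]
        simp only [hg]
        rw [max_eq_right hneg, zero_pow hn1']
    have hm : (∫ x in (γ*k)..T, g k x) = ∫ x in (γ*k)..T, (x - γ*k)^(n-1) := by
      apply intervalIntegral.integral_congr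
      intro x hx
      rw [Set.uIcc_of_le hcT] at hx
      have hpos : 0 ≤ x - γ*k := by linarith [hx.1]
      simp only [hg]
      rw [max_eq_left hpos]
    have hcomp : (∫ x in (γ*k)..T, (x - γ*k)^(n-1)) = (T - γ*k)^n / n := by
      rw [intervalIntegral.integral_comp_sub_right (fun y : ℝ => y^(n-1)) (γ*k), sub_self,
        intervalIntegral_integral_pow_local, hn1]
      have hc : ((n-1:ℕ):ℝ) + 1 = (n:ℝ) := by
        have h1 : (1:ℕ) ≤ n := by omega
        push_cast [Nat.cast_sub h1]
        ring
      rw [zero_pow hn0, sub_zero, hc]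
    rw [← intervalIntegral.integral_add_adjacent_intervals
      ((hgcont k).intervalIntegrable _ _ : IntervalIntegrable (g k) MeasureTheory.volume 0 (γ*k))
      ((hgcont k).intervalIntegrable _ _ : IntervalIntegrable (g k) MeasureTheory.volume (γ*k) T),
      hz, hm, hcomp, zero_add]
  rw [Finset.sum_congr rfl hgk]
  rw [intervalIntegral_integral_div_local, intervalIntegral_integral_div_local,
    intervalIntegral_integral_pow_local, intervalIntegral_integral_pow_local, hn1]
  rw [← Finset.sum_div]
  rw [zero_pow (by omega : n + 1 ≠ 0), zero_pow hn0]
  have hnR : ((n:ℝ)) ≠ 0 := by exact_mod_cast hn0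
  have hnR1 : ((n:ℝ)) + 1 ≠ 0 := by positivity
  field_simp
  rw [Nat.cast_sub (by omega : 1 ≤ n)]; push_cast; ring

open Filter MeasureTheory intervalIntegral

/-- **Euler–Maclaurin-type averaged estimate.**
Let `n ≥ 2`, `γ > 0`, and for `x > 0` set
`F(x) = ∑_{k=0}^{⌊x/γ⌋} (x−γk)^{n-1} − xⁿ/(nγ)`.
Then `F(x) = x^{n-1}/2 + r(x)` with `r(x) = O(x^{n-1})` and
`(1/Tⁿ)·∫₀ᵀ r(x) dx → 0` as `T → ∞`. -/
theorem euler_maclaurin_averaged_remainder (n : ℕ) (hn : 2 ≤ n) (γ : ℝ) (hγ : 0 < γ) :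
    ∃ r : ℝ → ℝ,
      (∀ x : ℝ, 0 < x →
        (∑ k ∈ Finset.range ((⌊x / γ⌋).toNat + 1), (x - γ * (k : ℝ)) ^ (n - 1))
          - x ^ n / (n * γ) = x ^ (n - 1) / 2 + r x) ∧
      (∃ C : ℝ, ∀ x : ℝ, 1 ≤ x → |r x| ≤ C * x ^ (n - 1)) ∧
      Tendsto (fun T : ℝ => (1 / T ^ n) * ∫ x in (0:ℝ)..T, r x) atTop (nhds 0) := by
  have hn0 : n ≠ 0 := by omega
  have hnR : (0:ℝ) < (n:ℝ) := by exact_mod_cast Nat.pos_of_ne_zero hn0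
  refine ⟨fun x => (∑ k ∈ Finset.range ((⌊x / γ⌋).toNat + 1), (x - γ * (k : ℝ)) ^ (n - 1))
      - x ^ n / (↑n * γ) - x ^ (n-1) / 2, ?_, ?_, ?_⟩
  · intro x _
    ring
  · refine ⟨1 + γ^(n-1) + 1, ?_⟩
    intro x hx
    have h := crude_bound n hn hγ hx
    have hxp : (0:ℝ) ≤ x^(n-1) := by positivity
    have habs : |(∑ k ∈ Finset.range ((⌊x / γ⌋).toNat + 1), (x - γ * (k : ℝ)) ^ (n - 1))
        - x ^ n / (↑n * γ) - x ^ (n-1) / 2|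
        ≤ |(∑ k ∈ Finset.range ((⌊x / γ⌋).toNat + 1), (x - γ * (k : ℝ)) ^ (n - 1))
          - x ^ n / (↑n * γ)| + |x ^ (n-1) / 2| := abs_sub _ _
    have h2 : |x^(n-1)/2| = x^(n-1)/2 := abs_of_nonneg (by positivity)
    rw [h2] at habs
    nlinarith [h, habs, hxp]
  · have hnγ : (0:ℝ) < (n:ℝ) * γ := mul_pos hnR hγ
    set C2 := (γ^2*(n:ℝ)^2 + 2*γ^(n+1)) / ((n:ℝ)*γ) with hC2
    have key : ∀ T : ℝ, 1 ≤ T →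
        |∫ x in (0:ℝ)..T, ((∑ k ∈ Finset.range ((⌊x / γ⌋).toNat + 1),
            (x - γ * (k : ℝ)) ^ (n - 1)) - x ^ n / (↑n * γ) - x ^ (n-1) / 2)|
          ≤ C2 * T^(n-1) := by
      intro T hT
      have hT0 : (0:ℝ) < T := lt_of_lt_of_le one_pos hT
      rw [integral_r n hn hγ hT0]
      have hD := sum_trapezoid_bound n hn hγ hT
      set S := ∑ k ∈ Finset.range ((⌊T / γ⌋).toNat + 1), (T - γ * (k : ℝ)) ^ n with hS
      have heq2 : S/(n:ℝ) - T^(n+1)/(((n:ℝ)+1)*((n:ℝ)*γ)) - T^n/(2*(n:ℝ))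
          = (γ*S - γ*T^n/2 - T^(n+1)/((n:ℝ)+1)) / ((n:ℝ)*γ) := by
        have h1 : ((n:ℝ)) ≠ 0 := ne_of_gt hnR
        have h2 : ((n:ℝ)+1) ≠ 0 := by positivity
        field_simp
        ring
      rw [heq2, abs_div, abs_of_pos hnγ, hC2, div_mul_eq_mul_div]
      gcongr
    refine squeeze_zero_norm' ?_ (tendsto_const_nhds.div_atTop (tendsto_id) : Tendsto (fun T : ℝ => C2 / T) atTop (nhds 0))
    filter_upwards [eventually_ge_atTop (1:ℝ)] with T hT
    have hT0 : (0:ℝ) < T := lt_of_lt_of_le one_pos hT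
    have h := key T hT
    rw [Real.norm_eq_abs, abs_mul]
    have h1 : |1/T^n| = 1/T^n := abs_of_nonneg (by positivity)
    rw [h1]
    have hTn : T^n = T^(n-1)*T := by rw [← pow_succ]; congr 1; omega
    have hTne : T ≠ 0 := ne_of_gt hT0
    have hTpow : T^(n-1) ≠ 0 := pow_ne_zero _ hTne
    calc (1/T^n) * |∫ x in (0:ℝ)..T, ((∑ k ∈ Finset.range ((⌊x / γ⌋).toNat + 1),
            (x - γ * (k : ℝ)) ^ (n - 1)) - x ^ n / (↑n * γ) - x ^ (n-1) / 2)|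
        ≤ (1/T^n) * (C2 * T^(n-1)) := by
          apply mul_le_mul_of_nonneg_left h (by positivity)
      _ = C2 / T := by rw [hTn]; field_simp
end

section
/- Let n ≥ 1 and γ > 0. Then for each fixed x, the integral ∫₀¹ (xu/γ − ⌊xu/γ⌋ − 1/2)·u^{n-2} du tends to 0 as x → ∞. -/
open Filter MeasureTheory intervalIntegral Set

noncomputable def sawG : ℝ → ℝ := fun t => Int.fract t * (Int.fract t - 1) / 2

lemma sawG_cont : Continuous sawG := by
  have h : ContinuousOn (fun s : ℝ => s * (s - 1) / 2) (Icc 0 1) :=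
    (continuous_id.mul (continuous_id.sub continuous_const)).continuousOn.div_const 2
  exact ContinuousOn.comp_fract'' h (by norm_num)

lemma sawG_bound (t : ℝ) : |sawG t| ≤ 1 / 8 := by
  have h0 : (0:ℝ) ≤ Int.fract t := Int.fract_nonneg t
  have h1 : Int.fract t < 1 := Int.fract_lt_one t
  rw [abs_le]
  constructor <;> unfold sawG <;> nlinarith [sq_nonneg (Int.fract t - 1/2)]

lemma sawG_deriv (t : ℝ) : HasDerivWithinAt sawG (Int.fract t - 1/2) (Ioi t) t := by
  set m : ℝ := (⌊t⌋ : ℝ) with hm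
  have hp : HasDerivAt (fun s : ℝ => (s - m) * ((s - m) - 1) / 2) (Int.fract t - 1/2) t := by
    have h := (((hasDerivAt_id t).sub_const m).mul
        (((hasDerivAt_id t).sub_const m).sub_const 1)).div_const 2
    simp only [id_eq] at h
    have h' : HasDerivAt (fun s : ℝ => (s - m) * ((s - m) - 1) / 2) ((1 * (t - m - 1) + (t - m) * 1) / 2) t := h
    convert h' using 1
    rw [← Int.self_sub_floor, ← hm]
    ring
  have heq : (fun s : ℝ => (s - m) * ((s - m) - 1) / 2) =ᶠ[nhdsWithin t (Ioi t)] sawG := by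
    have hmem : Ico t (m + 1) ∈ nhdsWithin t (Ioi t) := by
      apply mem_nhdsWithin.2
      refine ⟨Iio (m + 1), isOpen_Iio, Int.lt_floor_add_one t, fun s hs => ⟨le_of_lt hs.2, hs.1⟩⟩
    filter_upwards [hmem] with s hs
    have hfloor : ⌊s⌋ = ⌊t⌋ := by
      rw [Int.floor_eq_iff]
      refine ⟨le_trans (Int.floor_le t) hs.1, ?_⟩
      rw [← hm]
      exact hs.2
    unfold sawG
    rw [Int.fract, hfloor, ← hm]
  refine (hp.hasDerivWithinAt (s := Ioi t)).congr_of_eventuallyEq heq.symm ?_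
  unfold sawG
  rw [Int.fract, ← hm]

lemma fract_intervalIntegrable (k : ℕ) (a b : ℝ) :
    IntervalIntegrable (fun t : ℝ => (Int.fract t - 1/2) * t ^ k) volume a b := by
  have hfl : IntervalIntegrable (fun t : ℝ => ((⌊t⌋ : ℝ))) volume a b := by
    apply Monotone.intervalIntegrable
    intro s t hst
    show ((⌊s⌋ : ℝ)) ≤ ((⌊t⌋ : ℝ))
    exact_mod_cast Int.floor_mono hst
  have h1 : IntervalIntegrable (fun t : ℝ => Int.fract t - 1/2) volume a b := by
    have hid : IntervalIntegrable (fun t : ℝ => t) volume a b :=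
      continuous_id.intervalIntegrable a b
    have heq : (fun t : ℝ => Int.fract t - 1/2)
        = fun t : ℝ => (t - (⌊t⌋ : ℝ)) - 1/2 := by
      funext t; rw [Int.fract]
    rw [heq]
    exact (hid.sub hfl).sub (_root_.intervalIntegrable_const (c := (1/2:ℝ)))
  exact h1.mul_continuousOn (continuous_pow k).continuousOn

lemma sawtooth_key (k : ℕ) (T : ℝ) (hT : 0 ≤ T) :
    |∫ t in (0:ℝ)..T, (Int.fract t - 1/2) * t ^ k| ≤ T ^ k / 2 := by
  set H : ℝ → ℝ := fun t => sawG t * t ^ k with hH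
  have hderiv : ∀ t ∈ Ioo (0:ℝ) T, HasDerivWithinAt H
      ((Int.fract t - 1/2) * t ^ k + sawG t * (k * t ^ (k - 1))) (Ioi t) t := by
    intro t _
    exact (sawG_deriv t).mul ((hasDerivAt_pow k t).hasDerivWithinAt)
  have hcont : ContinuousOn H (Icc 0 T) :=
    (sawG_cont.mul (continuous_pow k)).continuousOn
  have hint2 : IntervalIntegrable (fun t => sawG t * (k * t ^ (k - 1))) volume 0 T :=
    (sawG_cont.mul (continuous_const.mul (continuous_pow (k-1)))).intervalIntegrable 0 T
  have hint : IntervalIntegrable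
      (fun t => (Int.fract t - 1/2) * t ^ k + sawG t * (k * t ^ (k - 1))) volume 0 T :=
    (fract_intervalIntegrable k 0 T).add hint2
  have hftc := integral_eq_sub_of_hasDeriv_right_of_le hT hcont hderiv hint
  have hsplit : ∫ t in (0:ℝ)..T, ((Int.fract t - 1/2) * t ^ k + sawG t * (k * t ^ (k - 1)))
      = (∫ t in (0:ℝ)..T, (Int.fract t - 1/2) * t ^ k)
        + ∫ t in (0:ℝ)..T, sawG t * (k * t ^ (k - 1)) :=
    integral_add (fract_intervalIntegrable k 0 T) hint2
  have hH0 : H 0 = 0 := by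
    simp [hH, sawG, Int.fract_zero]
  have hHT : H T = sawG T * T ^ k := rfl
  have key : (∫ t in (0:ℝ)..T, (Int.fract t - 1/2) * t ^ k)
      = sawG T * T ^ k - ∫ t in (0:ℝ)..T, sawG t * (k * t ^ (k - 1)) := by
    rw [hsplit, hH0, sub_zero, hHT] at hftc
    linarith [hftc]
  rw [key]
  have hb1 : |sawG T * T ^ k| ≤ T ^ k / 8 := by
    rw [abs_mul, abs_of_nonneg (pow_nonneg hT k)]
    have := sawG_bound T
    nlinarith [pow_nonneg hT k]
  have hb2 : |∫ t in (0:ℝ)..T, sawG t * (k * t ^ (k - 1))| ≤ T ^ k / 8 * 3 := by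
    rcases Nat.eq_zero_or_pos k with rfl | hk
    · simp
    · obtain ⟨m, rfl⟩ : ∃ m, k = m + 1 := ⟨k - 1, (Nat.succ_pred_eq_of_pos hk).symm⟩
      simp only [Nat.add_sub_cancel]
      have habs : |∫ t in (0:ℝ)..T, sawG t * (((m+1 : ℕ) : ℝ) * t ^ m)|
          ≤ ∫ t in (0:ℝ)..T, |sawG t * (((m+1 : ℕ) : ℝ) * t ^ m)| :=
        intervalIntegral.abs_integral_le_integral_abs hT
      have hmono : (∫ t in (0:ℝ)..T, |sawG t * (((m+1 : ℕ) : ℝ) * t ^ m)|)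
          ≤ ∫ t in (0:ℝ)..T, (1/8) * (((m:ℝ)+1) * t ^ m) := by
        apply intervalIntegral.integral_mono_on hT
        · exact ((sawG_cont.mul (continuous_const.mul (continuous_pow m))).abs).intervalIntegrable 0 T
        · exact (continuous_const.mul (continuous_const.mul (continuous_pow m))).intervalIntegrable 0 T
        · intro t ht
          rw [abs_mul]
          have ht0 : (0:ℝ) ≤ t := ht.1
          have h2 : |((m+1 : ℕ) : ℝ) * t ^ m| = ((m:ℝ)+1) * t ^ m := by
            rw [abs_of_nonneg (by positivity)]
            push_cast; ring
          rw [h2]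
          exact mul_le_mul_of_nonneg_right (sawG_bound t) (by positivity)
      have hval : (∫ t in (0:ℝ)..T, (1/8) * (((m:ℝ)+1) * t ^ m)) = T ^ (m+1) / 8 := by
        rw [intervalIntegral.integral_const_mul, intervalIntegral.integral_const_mul,
          integral_pow]
        have hm1 : ((m:ℝ)+1) ≠ 0 := by positivity
        rw [zero_pow (Nat.succ_ne_zero m)]
        field_simp
        ring
      calc |∫ t in (0:ℝ)..T, sawG t * (((m+1 : ℕ) : ℝ) * t ^ m)|
          ≤ ∫ t in (0:ℝ)..T, |sawG t * (((m+1 : ℕ) : ℝ) * t ^ m)| := habs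
        _ ≤ ∫ t in (0:ℝ)..T, (1/8) * (((m:ℝ)+1) * t ^ m) := hmono
        _ = T ^ (m+1) / 8 := hval
        _ ≤ T ^ (m+1) / 8 * 3 := by nlinarith [pow_nonneg hT (m+1)]
  calc |sawG T * T ^ k - ∫ t in (0:ℝ)..T, sawG t * (k * t ^ (k - 1))|
      ≤ |sawG T * T ^ k| + |∫ t in (0:ℝ)..T, sawG t * (k * t ^ (k - 1))| := abs_sub _ _
    _ ≤ T ^ k / 8 + T ^ k / 8 * 3 := add_le_add hb1 hb2
    _ = T ^ k / 2 := by ring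

/-- **Riemann–Lebesgue-type lemma for the sawtooth function.**
For `n ≥ 1` and `γ > 0`, the integral
`∫₀¹ (xu/γ − ⌊xu/γ⌋ − 1/2)·u^{n-2} du` tends to `0` as `x → ∞`. -/
theorem sawtooth_riemann_lebesgue (n : ℕ) (hn : 1 ≤ n) (γ : ℝ) (hγ : 0 < γ) :
    Tendsto (fun x : ℝ =>
        ∫ u in (0:ℝ)..1, (x * u / γ - (⌊x * u / γ⌋ : ℝ) - 1 / 2) * u ^ (n - 2))
      atTop (nhds 0) := by
  set k := n - 2 with hk
  have hbound : ∀ x : ℝ, 0 < x →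
      |∫ u in (0:ℝ)..1, (x * u / γ - (⌊x * u / γ⌋ : ℝ) - 1/2) * u ^ k| ≤ γ / (2 * x) := by
    intro x hx
    set c := x / γ with hc
    have hc0 : 0 < c := div_pos hx hγ
    have hrw : ∀ u : ℝ, (x * u / γ - (⌊x * u / γ⌋ : ℝ) - 1/2) * u ^ k
        = (fun t => (Int.fract t - 1/2) * (t / c) ^ k) (u * c) := by
      intro u
      have h1 : x * u / γ = u * c := by rw [hc]; ring
      simp only [h1, Int.fract]
      rw [mul_div_cancel_right₀ u hc0.ne']
    have hre : (∫ u in (0:ℝ)..1, (x * u / γ - (⌊x * u / γ⌋ : ℝ) - 1/2) * u ^ k)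
        = c⁻¹ • ∫ t in (0:ℝ)*c..1*c, (Int.fract t - 1/2) * (t / c) ^ k := by
      simp only [hrw]
      exact intervalIntegral.integral_comp_mul_right (fun t => (Int.fract t - 1/2) * (t / c) ^ k) hc0.ne'
    rw [hre]
    simp only [zero_mul, one_mul, smul_eq_mul]
    have h2 : (∫ t in (0:ℝ)..c, (Int.fract t - 1/2) * (t / c) ^ k)
        = (∫ t in (0:ℝ)..c, (Int.fract t - 1/2) * t ^ k) / c ^ k := by
      rw [← intervalIntegral.integral_div]
      congr 1; funext t
      rw [div_pow]; ring
    rw [h2, abs_mul, abs_inv, abs_of_pos hc0, abs_div, abs_of_pos (pow_pos hc0 k)]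
    have hkey := sawtooth_key k c hc0.le
    calc c⁻¹ * (|∫ t in (0:ℝ)..c, (Int.fract t - 1/2) * t ^ k| / c ^ k)
        ≤ c⁻¹ * ((c ^ k / 2) / c ^ k) := by gcongr
      _ = γ / (2 * x) := by
          have hck : c ^ k ≠ 0 := (pow_pos hc0 k).ne'
          rw [div_right_comm, div_self hck, hc]
          field_simp
  have h0 : Tendsto (fun x : ℝ => γ / (2 * x)) atTop (nhds 0) :=
    Tendsto.div_atTop tendsto_const_nhds (Tendsto.const_mul_atTop (by norm_num) tendsto_id)
  apply squeeze_zero_norm' _ h0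
  filter_upwards [eventually_gt_atTop 0] with x hx
  simpa [Real.norm_eq_abs] using hbound x hx
end

section
/- Hecke transform exact sequence: let M be a ℤ-graded module with a decreasing filtration M_{≥k} coming from a valuative function v_M with values in δ·ℤ, let N̲ ⊆ gr(M) = ⊕_k M_{≥kδ}/M_{≥(k+1)δ} be a graded submodule, and let v'_M be the Hecke transform of v_M along N̲, with filtration M'_{≥nδ} = p_{nδ}^{-1}(N̲_{nδ}) + M_{≥(n+1)δ}. Then there is a natural short exact sequence of graded modules 0 → (gr(M)/N̲)(δ) → gr'(M) → N̲ → 0, where gr'(M) is the associated graded of v'_M. -/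
universe u

variable {R : Type u} [CommRing R] {M : Type u} [AddCommGroup M] [Module R M]

/-- The `k`-th graded piece `F k / F (k+1)` of the associated graded module of a
decreasing `ℤ`-indexed filtration `F` on `M`. -/
def GrPiece (F : ℤ → Submodule R M) (k : ℤ) : Type u :=
  ↥(F k) ⧸ (F (k + 1)).comap (F k).subtype

noncomputable instance (F : ℤ → Submodule R M) (k : ℤ) : AddCommGroup (GrPiece F k) :=
  inferInstanceAs (AddCommGroup (↥(F k) ⧸ (F (k + 1)).comap (F k).subtype))

noncomputable instance (F : ℤ → Submodule R M) (k : ℤ) : Module R (GrPiece F k) :=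
  inferInstanceAs (Module R (↥(F k) ⧸ (F (k + 1)).comap (F k).subtype))

/-- The quotient map `p_k : F k → F k / F (k+1)`. -/
noncomputable def grProj (F : ℤ → Submodule R M) (k : ℤ) :
    ↥(F k) →ₗ[R] GrPiece F k :=
  ((F (k + 1)).comap (F k).subtype).mkQ

/-- The Hecke transform filtration `F' k = p_k⁻¹(N k) + F (k+1)` of a filtration `F`
along a graded submodule `N` of the associated graded module. -/
noncomputable def heckeFil (F : ℤ → Submodule R M)
    (N : ∀ k : ℤ, Submodule R (GrPiece F k)) (k : ℤ) : Submodule R M :=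
  Submodule.map (F k).subtype (Submodule.comap (grProj F k) (N k)) ⊔ F (k + 1)

/-- **Hecke transform exact sequence.**
Let `F` be a decreasing `ℤ`-indexed filtration on a module `M` (the filtration
`M_{≥kδ}` of a valuative function with values in `δ·ℤ`), let `N` be a graded
submodule of the associated graded `gr(M) = ⊕_k F k / F (k+1)`, and let `F'` be
the Hecke transform filtration `F' k = p_k⁻¹(N k) + F (k+1)`.  Then for every `k`
there is a natural short exact sequence
`0 → (gr(M)/N)(δ)ₖ = (F (k+1)/F (k+2))/N (k+1) → gr'(M)ₖ → N k → 0`. -/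
theorem hecke_transform_exact_sequence
    (F : ℤ → Submodule R M) (hF : ∀ k : ℤ, F (k + 1) ≤ F k)
    (N : ∀ k : ℤ, Submodule R (GrPiece F k)) (k : ℤ) :
    ∃ (f : (GrPiece F (k + 1) ⧸ N (k + 1)) →ₗ[R] GrPiece (heckeFil F N) k)
      (g : GrPiece (heckeFil F N) k →ₗ[R] ↥(N k)),
      Function.Injective f ∧ Function.Surjective g ∧
      LinearMap.range f = LinearMap.ker g := by
  classical
  -- basic inclusions
  have hmap : ∀ j : ℤ, Submodule.map (F j).subtype
      (Submodule.comap (grProj F j) (N j)) ≤ F j := by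
    rintro j _ ⟨y, hy, rfl⟩; exact y.2
  have hsub : ∀ j : ℤ, heckeFil F N j ≤ F j := fun j => sup_le (hmap j) (hF j)
  have hFk1 : F (k + 1) ≤ heckeFil F N k := le_sup_right
  have hF2 : F (k + 1 + 1) ≤ heckeFil F N (k + 1) := le_sup_right
  -- key : projection of an element of `F' j` lies in `N j`
  have key : ∀ (j : ℤ) (x : ↥(F j)), (x : M) ∈ heckeFil F N j → grProj F j x ∈ N j := by
    intro j x hx
    obtain ⟨a, ha, b, hb, hab⟩ := Submodule.mem_sup.1 hx
    obtain ⟨a', ha', rfl⟩ := ha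
    have hxe : x = a' + ⟨b, hF j hb⟩ := Subtype.ext (by simpa using hab.symm)
    have hb0 : grProj F j ⟨b, hF j hb⟩ = 0 := by
      show Submodule.Quotient.mk _ = (0 : GrPiece F j)
      exact (Submodule.Quotient.mk_eq_zero _).2
        (show (⟨b, hF j hb⟩ : ↥(F j)) ∈ (F (j + 1)).comap (F j).subtype from hb)
    rw [hxe, map_add, hb0, add_zero]
    exact ha'
  have key' : ∀ (j : ℤ) (x : ↥(F j)), grProj F j x ∈ N j → (x : M) ∈ heckeFil F N j :=
    fun j x hx => Submodule.mem_sup_left ⟨x, hx, rfl⟩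
  -- construction of `g`
  let q : ↥(heckeFil F N k) →ₗ[R] GrPiece F k :=
    (grProj F k).comp (Submodule.inclusion (hsub k))
  have hq : ∀ x, q x ∈ N k := fun x => key k _ x.2
  let g0 : ↥(heckeFil F N k) →ₗ[R] ↥(N k) := q.codRestrict (N k) hq
  have g0_zero : ∀ y : ↥(heckeFil F N k), (y : M) ∈ F (k + 1) → g0 y = 0 := by
    intro y hy
    have hq0 : q y = 0 := by
      show Submodule.Quotient.mk _ = (0 : GrPiece F k)
      exact (Submodule.Quotient.mk_eq_zero _).2
        (show Submodule.inclusion (hsub k) y ∈ (F (k + 1)).comap (F k).subtype from hy)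
    exact Subtype.ext hq0
  have hkerg0 : ((heckeFil F N (k + 1)).comap (heckeFil F N k).subtype) ≤
      LinearMap.ker g0 := fun y hy =>
    LinearMap.mem_ker.2 (g0_zero y (hsub (k + 1) hy))
  let g : GrPiece (heckeFil F N) k →ₗ[R] ↥(N k) :=
    Submodule.liftQ _ g0 hkerg0
  -- characterisation of `g` being zero
  have g_mk : ∀ y : ↥(heckeFil F N k), g (Submodule.Quotient.mk y) = g0 y := fun y => rfl
  -- construction of `f`
  let i : ↥(F (k + 1)) →ₗ[R] GrPiece (heckeFil F N) k :=
    (grProj (heckeFil F N) k).comp (Submodule.inclusion hFk1)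
  have i_zero : ∀ x : ↥(F (k + 1)), (x : M) ∈ heckeFil F N (k + 1) → i x = 0 := by
    intro x hx
    show Submodule.Quotient.mk _ = (0 : GrPiece (heckeFil F N) k)
    exact (Submodule.Quotient.mk_eq_zero _).2
      (show Submodule.inclusion hFk1 x ∈
        (heckeFil F N (k + 1)).comap (heckeFil F N k).subtype from hx)
  have i_zero' : ∀ x : ↥(F (k + 1)), i x = 0 → (x : M) ∈ heckeFil F N (k + 1) := by
    intro x hx
    exact (Submodule.Quotient.mk_eq_zero ((heckeFil F N (k + 1)).comap
      (heckeFil F N k).subtype)).1 hx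
  have hkeri : ((F (k + 1 + 1)).comap (F (k + 1)).subtype) ≤ LinearMap.ker i :=
    fun x hx => LinearMap.mem_ker.2 (i_zero x (hF2 hx))
  let f1 : GrPiece F (k + 1) →ₗ[R] GrPiece (heckeFil F N) k :=
    Submodule.liftQ _ i hkeri
  have f1_mk : ∀ x : ↥(F (k + 1)), f1 (Submodule.Quotient.mk x) = i x := fun x => rfl
  have hkerf1 : N (k + 1) ≤ LinearMap.ker f1 := by
    intro ξ hξ
    obtain ⟨x, rfl⟩ := Submodule.mkQ_surjective _ ξ
    have : (x : M) ∈ heckeFil F N (k + 1) := key' (k + 1) x hξ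
    exact LinearMap.mem_ker.2 ((f1_mk x).trans (i_zero x this))
  let f : (GrPiece F (k + 1) ⧸ N (k + 1)) →ₗ[R] GrPiece (heckeFil F N) k :=
    Submodule.liftQ _ f1 hkerf1
  have f_mk : ∀ x : ↥(F (k + 1)),
      f (Submodule.Quotient.mk (Submodule.Quotient.mk x)) = i x := fun x => rfl
  refine ⟨f, g, ?_, ?_, ?_⟩
  · -- injectivity of f
    rw [← LinearMap.ker_eq_bot, LinearMap.ker_eq_bot']
    intro a ha
    obtain ⟨ξ, rfl⟩ := Submodule.mkQ_surjective _ a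
    obtain ⟨x, rfl⟩ := Submodule.mkQ_surjective _ ξ
    have hx : (x : M) ∈ heckeFil F N (k + 1) := i_zero' x (by rw [← f_mk]; exact ha)
    have : grProj F (k + 1) x ∈ N (k + 1) := key (k + 1) x hx
    exact (Submodule.Quotient.mk_eq_zero _).2 this
  · -- surjectivity of g
    intro n
    obtain ⟨x, hx⟩ := Submodule.mkQ_surjective ((F (k + 1)).comap (F k).subtype)
      (n : GrPiece F k)
    have hmem : (x : M) ∈ heckeFil F N k := key' k x (by rw [show grProj F k x = n from hx]; exact n.2)
    refine ⟨Submodule.Quotient.mk ⟨(x : M), hmem⟩, ?_⟩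
    rw [g_mk]
    apply Subtype.ext
    show q ⟨(x : M), hmem⟩ = (n : GrPiece F k)
    have : Submodule.inclusion (hsub k) ⟨(x : M), hmem⟩ = x := Subtype.ext rfl
    show grProj F k (Submodule.inclusion (hsub k) ⟨(x : M), hmem⟩) = (n : GrPiece F k)
    rw [this]; exact hx
  · -- range f = ker g
    ext z
    constructor
    · rintro ⟨a, rfl⟩
      obtain ⟨ξ, rfl⟩ := Submodule.mkQ_surjective _ a
      obtain ⟨x, rfl⟩ := Submodule.mkQ_surjective _ ξ
      rw [LinearMap.mem_ker]
      show g (i x) = 0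
      rw [show i x = Submodule.Quotient.mk (Submodule.inclusion hFk1 x) from rfl, g_mk]
      exact g0_zero _ x.2
    · intro hz
      obtain ⟨y, rfl⟩ := Submodule.mkQ_surjective _ z
      have hy0 : g0 y = 0 := LinearMap.mem_ker.1 hz
      have hq0 : q y = 0 := congrArg Subtype.val hy0
      have hyF : (y : M) ∈ F (k + 1) :=
        (Submodule.Quotient.mk_eq_zero ((F (k + 1)).comap (F k).subtype)).1 hq0
      refine ⟨Submodule.Quotient.mk (Submodule.Quotient.mk ⟨(y : M), hyF⟩), ?_⟩
      rw [f_mk]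
      rfl
end

section
/- For the weighted monomial count with two weights: let a, b > 0 be real. Then #{(m,n) ∈ ℤ₊² : am + bn ≤ x} = x²/(2ab) + O(x) as x → ∞, and moreover lim_{T→∞} (1/T²)·∫₀ᵀ ( #{(m,n): am+bn ≤ x} − x²/(2ab) − (a+b)x/(2ab) ) dx = 0. -/
open Filter MeasureTheory intervalIntegral

open Finset


lemma sum_id_real (K : ℕ) : ∑ i ∈ range (K+1), (i:ℝ) = K*(K+1)/2 := by
  induction K with
  | zero => simp
  | succ n ih => rw [Finset.sum_range_succ, ih]; push_cast; ring

lemma sum_sq_real (K : ℕ) : ∑ i ∈ range (K+1), (i:ℝ)^2 = K*(K+1)*(2*K+1)/6 := by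
  induction K with
  | zero => simp
  | succ n ih => rw [Finset.sum_range_succ, ih]; push_cast; ring

lemma filter_range_eq (c x : ℝ) (hc : 0 < c) (hx : 0 ≤ x) (A : ℕ) (hA : ⌊x/c⌋₊ < A) :
    ((range A).filter fun n : ℕ => c*(n:ℝ) ≤ x) = range (⌊x/c⌋₊ + 1) := by
  have key : ∀ n : ℕ, (c*(n:ℝ) ≤ x ↔ n ≤ ⌊x/c⌋₊) := by
    intro n
    rw [Nat.le_floor_iff (div_nonneg hx hc.le), le_div_iff₀ hc, mul_comm]
  ext n
  simp only [Finset.mem_filter, Finset.mem_range, Nat.lt_succ_iff, key]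
  constructor
  · rintro ⟨_, h⟩; exact h
  · intro h; exact ⟨lt_of_le_of_lt h hA, h⟩

lemma sum_linear_bounds (c s : ℝ) (hc : 0 < c) (hs : 0 ≤ s) :
    s^2/(2*c) + s/2 ≤ (∑ n ∈ range (⌊s/c⌋₊+1), (s - c*(n:ℝ))) ∧
    (∑ n ∈ range (⌊s/c⌋₊+1), (s - c*(n:ℝ))) ≤ s^2/(2*c) + s/2 + c/8 := by
  set K := ⌊s/c⌋₊ with hK
  set r := s - c*K with hr
  have hs2 : s = c*(K:ℝ) + r := by rw [hr]; ring
  have hr0 : 0 ≤ r := by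
    have := Nat.floor_le (div_nonneg hs hc.le)
    rw [hr, hK, sub_nonneg]
    calc c * (⌊s/c⌋₊:ℝ) ≤ c * (s/c) := by nlinarith
    _ = s := by field_simp
  have hr1 : r < c := by
    have h2 := Nat.lt_floor_add_one (s/c)
    rw [hr]
    have : s/c < (K:ℝ) + 1 := h2
    nlinarith [(div_lt_iff₀ hc).mp this]
  have hsum : (∑ n ∈ range (K+1), (s - c*(n:ℝ))) = (K+1)*s - c*(K*(K+1)/2) := by
    rw [Finset.sum_sub_distrib, Finset.sum_const, Finset.card_range, ← Finset.mul_sum,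
      sum_id_real]
    push_cast; ring
  have key : (∑ n ∈ range (K+1), (s - c*(n:ℝ))) = s^2/(2*c) + s/2 + r*(c-r)/(2*c) := by
    rw [hsum, hs2]; field_simp; ring
  rw [key]
  constructor
  · have : 0 ≤ r*(c-r)/(2*c) := div_nonneg (mul_nonneg hr0 (by linarith)) (by linarith)
    linarith
  · have h1 : r*(c-r) ≤ c^2/4 := by nlinarith [sq_nonneg (2*r - c)]
    have h2 : r*(c-r)/(2*c) ≤ (c^2/4)/(2*c) := by
      apply div_le_div_of_nonneg_right h1 (by linarith) |>.trans_eq rfl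
    have h3 : (c^2/4)/(2*c) = c/8 := by field_simp; ring
    linarith [h2, h3.le]

lemma sum_sq_bounds (c s : ℝ) (hc : 0 < c) (hs : 0 ≤ s) :
    s^3/(3*c) + s^2/2 ≤ (∑ n ∈ range (⌊s/c⌋₊+1), (s - c*(n:ℝ))^2) ∧
    (∑ n ∈ range (⌊s/c⌋₊+1), (s - c*(n:ℝ))^2) ≤ s^3/(3*c) + s^2/2 + c*s/6 + c^2/2 := by
  set K := ⌊s/c⌋₊ with hK
  set r := s - c*K with hr
  have hs2 : s = c*(K:ℝ) + r := by rw [hr]; ring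
  have hr0 : 0 ≤ r := by
    have := Nat.floor_le (div_nonneg hs hc.le)
    rw [hr, hK, sub_nonneg]
    calc c * (⌊s/c⌋₊:ℝ) ≤ c * (s/c) := by nlinarith
    _ = s := by field_simp
  have hr1 : r < c := by
    have h2 := Nat.lt_floor_add_one (s/c)
    rw [hr]
    have : s/c < (K:ℝ) + 1 := h2
    nlinarith [(div_lt_iff₀ hc).mp this]
  have hcK : c*(K:ℝ) ≤ s := by nlinarith
  have hsum : (∑ n ∈ range (K+1), (s - c*(n:ℝ))^2)
      = (K+1)*s^2 - 2*c*s*(K*(K+1)/2) + c^2*(K*(K+1)*(2*K+1)/6) := by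
    have expand : ∀ n : ℕ, (s - c*(n:ℝ))^2 = s^2 - (2*c*s)*(n:ℝ) + c^2*(n:ℝ)^2 := by
      intro n; ring
    rw [Finset.sum_congr rfl (fun n _ => expand n)]
    rw [Finset.sum_add_distrib, Finset.sum_sub_distrib, Finset.sum_const, Finset.card_range,
      ← Finset.mul_sum, ← Finset.mul_sum, sum_id_real, sum_sq_real]
    push_cast; ring
  have key : (∑ n ∈ range (K+1), (s - c*(n:ℝ))^2)
      = s^3/(3*c) + s^2/2 + (c^2*(K:ℝ)/6 + r^2/2 - r^3/(3*c)) := by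
    rw [hsum, hs2]; field_simp; ring
  rw [key]
  have hK0 : (0:ℝ) ≤ (K:ℝ) := Nat.cast_nonneg K
  constructor
  · have h4 : r^3/(3*c) ≤ r^2/3 := by
      rw [div_le_iff₀ (by linarith : (0:ℝ) < 3*c)]; nlinarith [sq_nonneg r]
    have h5 : 0 ≤ c^2*(K:ℝ)/6 := by positivity
    nlinarith [sq_nonneg r]
  · have h1 : c^2*(K:ℝ)/6 ≤ c*s/6 := by nlinarith
    have h2 : r^2/2 ≤ c^2/2 := by nlinarith
    have h3 : 0 ≤ r^3/(3*c) := by positivity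
    linarith

noncomputable def Fr (a b x : ℝ) : Finset (ℕ × ℕ) :=
  (range (⌊x/a⌋₊+1) ×ˢ range (⌊x/b⌋₊+1)).filter
    fun p => a*(p.1:ℝ) + b*(p.2:ℝ) ≤ x

lemma set_eq_Fr (a b x : ℝ) (ha : 0 < a) (hb : 0 < b) (hx : 0 ≤ x) :
    {p : ℕ × ℕ | a * (p.1 : ℝ) + b * (p.2 : ℝ) ≤ x} = ↑(Fr a b x) := by
  ext p
  simp only [Fr, Set.mem_setOf_eq, Finset.coe_filter, Finset.mem_coe, Finset.mem_product,
    Finset.mem_range, Nat.lt_succ_iff, Set.mem_setOf_eq]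
  constructor
  · intro h
    have h1 : a*(p.1:ℝ) ≤ x := by nlinarith [mul_nonneg hb.le (Nat.cast_nonneg p.2 : (0:ℝ) ≤ p.2)]
    have h2 : b*(p.2:ℝ) ≤ x := by nlinarith [mul_nonneg ha.le (Nat.cast_nonneg p.1 : (0:ℝ) ≤ p.1)]
    refine ⟨⟨?_, ?_⟩, h⟩
    · rw [Nat.le_floor_iff (div_nonneg hx ha.le)]
      rw [le_div_iff₀ ha]; linarith [mul_comm a (p.1:ℝ)]
    · rw [Nat.le_floor_iff (div_nonneg hx hb.le)]
      rw [le_div_iff₀ hb]; linarith [mul_comm b (p.2:ℝ)]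
  · exact fun h => h.2

lemma card_Fr (a b x : ℝ) (ha : 0 < a) (hb : 0 < b) (hx : 0 ≤ x) :
    (Fr a b x).card = ∑ m ∈ range (⌊x/a⌋₊+1), (⌊(x - a*m)/b⌋₊ + 1) := by
  rw [Fr, Finset.card_filter, Finset.sum_product]
  refine Finset.sum_congr rfl fun m hm => ?_
  rw [Finset.mem_range, Nat.lt_succ_iff] at hm
  have ham : a*(m:ℝ) ≤ x := by
    rw [Nat.le_floor_iff (div_nonneg hx ha.le)] at hm
    calc a*(m:ℝ) = (m:ℝ)*a := mul_comm _ _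
    _ ≤ (x/a)*a := by nlinarith
    _ = x := by field_simp
  have hxm : 0 ≤ x - a*m := by linarith
  have hcond : ∀ n : ℕ, (a*(m:ℝ) + b*(n:ℝ) ≤ x ↔ b*(n:ℝ) ≤ x - a*m) := fun n => by
    constructor <;> intro h <;> linarith
  have hA : ⌊(x - a*m)/b⌋₊ < ⌊x/b⌋₊ + 1 := by
    rw [Nat.lt_succ_iff]
    exact Nat.floor_le_floor (by gcongr; nlinarith [mul_nonneg ha.le (Nat.cast_nonneg m : (0:ℝ) ≤ m)])
  calc (∑ n ∈ range (⌊x/b⌋₊+1), if a*(m:ℝ) + b*(n:ℝ) ≤ x then 1 else 0)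
      = ((range (⌊x/b⌋₊+1)).filter fun n : ℕ => b*(n:ℝ) ≤ x - a*m).card := by
        rw [Finset.card_filter]
        exact Finset.sum_congr rfl fun n _ => if_congr (hcond n) rfl rfl
    _ = ⌊(x - a*m)/b⌋₊ + 1 := by
        rw [filter_range_eq b (x - a*m) hb hxm _ hA, Finset.card_range]

lemma am_le (a x : ℝ) (ha : 0 < a) (hx : 0 ≤ x) {m : ℕ} (hm : m ≤ ⌊x/a⌋₊) : a*(m:ℝ) ≤ x := by
  rw [Nat.le_floor_iff (div_nonneg hx ha.le)] at hm
  calc a*(m:ℝ) = (m:ℝ)*a := mul_comm _ _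
  _ ≤ (x/a)*a := by nlinarith
  _ = x := by field_simp

lemma N_bounds (a b x : ℝ) (ha : 0 < a) (hb : 0 < b) (hx : 0 ≤ x) :
    x^2/(2*a*b) + x/(2*b) ≤ ((Fr a b x).card : ℝ) ∧
    ((Fr a b x).card : ℝ) ≤ x^2/(2*a*b) + x/(2*b) + a/(8*b) + (x/a + 1) := by
  have hcard : ((Fr a b x).card : ℝ)
      = ∑ m ∈ range (⌊x/a⌋₊+1), ((⌊(x - a*(m:ℝ))/b⌋₊ : ℝ) + 1) := by
    rw [card_Fr a b x ha hb hx]; push_cast; rfl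
  have hS := sum_linear_bounds a x ha hx
  have hMx : ((⌊x/a⌋₊ : ℝ) + 1) ≤ x/a + 1 := by
    have := Nat.floor_le (div_nonneg hx ha.le); linarith
  have hlow : ∀ m ∈ range (⌊x/a⌋₊+1), (x - a*(m:ℝ))/b ≤ (⌊(x - a*(m:ℝ))/b⌋₊ : ℝ) + 1 := by
    intro m hm
    exact (Nat.lt_floor_add_one _).le
  have hup : ∀ m ∈ range (⌊x/a⌋₊+1), (⌊(x - a*(m:ℝ))/b⌋₊ : ℝ) + 1 ≤ (x - a*(m:ℝ))/b + 1 := by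
    intro m hm
    rw [Finset.mem_range, Nat.lt_succ_iff] at hm
    have : 0 ≤ x - a*(m:ℝ) := by linarith [am_le a x ha hx hm]
    have := Nat.floor_le (div_nonneg this hb.le)
    linarith
  constructor
  · have e1 : (x^2/(2*a) + x/2)/b ≤ (∑ m ∈ range (⌊x/a⌋₊+1), (x - a*(m:ℝ)))/b := by
      gcongr; exact hS.1
    have e2 : (∑ m ∈ range (⌊x/a⌋₊+1), (x - a*(m:ℝ)))/b
        ≤ ∑ m ∈ range (⌊x/a⌋₊+1), ((⌊(x - a*(m:ℝ))/b⌋₊ : ℝ) + 1) := by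
      rw [Finset.sum_div]
      exact Finset.sum_le_sum hlow
    have e3 : x^2/(2*a*b) + x/(2*b) = (x^2/(2*a) + x/2)/b := by field_simp
    rw [hcard, e3]; linarith
  · have e1 : ((Fr a b x).card : ℝ) ≤ ∑ m ∈ range (⌊x/a⌋₊+1), ((x - a*(m:ℝ))/b + 1) := by
      rw [hcard]; exact Finset.sum_le_sum hup
    have e2 : ∑ m ∈ range (⌊x/a⌋₊+1), ((x - a*(m:ℝ))/b + 1)
        = (∑ m ∈ range (⌊x/a⌋₊+1), (x - a*(m:ℝ)))/b + ((⌊x/a⌋₊:ℝ) + 1) := by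
      rw [Finset.sum_add_distrib, Finset.sum_const, Finset.card_range, ← Finset.sum_div]
      push_cast; ring
    have e3 : (∑ m ∈ range (⌊x/a⌋₊+1), (x - a*(m:ℝ)))/b ≤ (x^2/(2*a) + x/2 + a/8)/b := by
      gcongr; exact hS.2
    have e4 : (x^2/(2*a) + x/2 + a/8)/b = x^2/(2*a*b) + x/(2*b) + a/(8*b) := by
      field_simp
    linarith

lemma ind_mono (c : ℝ) : Monotone (fun x : ℝ => if c ≤ x then (1:ℝ) else 0) := by
  intro u v huv
  by_cases h : c ≤ u
  · simp [h, le_trans h huv]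
  · by_cases h2 : c ≤ v <;> simp [h, h2]

lemma integral_ind (c T : ℝ) (hc : 0 ≤ c) (hcT : c ≤ T) :
    ∫ x in (0:ℝ)..T, (if c ≤ x then (1:ℝ) else 0) = T - c := by
  set f : ℝ → ℝ := fun x => if c ≤ x then (1:ℝ) else 0 with hf
  have hi1 : IntervalIntegrable f volume 0 c :=
    ((ind_mono c).monotoneOn _).intervalIntegrable
  have hi2 : IntervalIntegrable f volume c T :=
    ((ind_mono c).monotoneOn _).intervalIntegrable
  rw [← intervalIntegral.integral_add_adjacent_intervals hi1 hi2]
  have e2 : ∫ x in c..T, f x = T - c := by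
    rw [intervalIntegral.integral_congr (g := fun _ => (1:ℝ))]
    · simp
    · intro x hx
      rw [Set.uIcc_of_le hcT] at hx
      simp [hf, hx.1]
  have e1 : ∫ x in (0:ℝ)..c, f x = 0 := by
    rw [intervalIntegral.integral_congr_ae (g := fun _ => (0:ℝ))]
    · simp
    · have hne : ∀ᵐ (x:ℝ), x ≠ c := by
        refine ae_iff.mpr ?_
        simp only [Classical.not_not]
        have : {x : ℝ | x = c} = {c} := by ext y; simp
        rw [this]
        exact Real.volume_singleton
      filter_upwards [hne] with x hx hmem
      rw [Set.uIoc_of_le hc] at hmem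
      have : ¬ c ≤ x := by
        intro h
        exact hx (le_antisymm hmem.2 h)
      simp [hf, this]
  rw [e1, e2]; ring

lemma F_repr (a b T : ℝ) (ha : 0 < a) (hb : 0 < b) (hT : 0 ≤ T) :
    (∑ p ∈ Fr a b T, (T - (a*(p.1:ℝ) + b*(p.2:ℝ))))
      = ∑ m ∈ range (⌊T/a⌋₊+1),
          ∑ n ∈ range (⌊(T - a*(m:ℝ))/b⌋₊+1), ((T - a*(m:ℝ)) - b*(n:ℝ)) := by
  rw [Fr, Finset.sum_filter, Finset.sum_product]
  refine Finset.sum_congr rfl fun m hm => ?_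
  rw [Finset.mem_range, Nat.lt_succ_iff] at hm
  have ham : a*(m:ℝ) ≤ T := am_le a T ha hT hm
  have hxm : 0 ≤ T - a*m := by linarith
  have hA : ⌊(T - a*m)/b⌋₊ < ⌊T/b⌋₊ + 1 := by
    rw [Nat.lt_succ_iff]
    exact Nat.floor_le_floor
      (by gcongr; nlinarith [mul_nonneg ha.le (Nat.cast_nonneg m : (0:ℝ) ≤ m)])
  have step1 : (∑ n ∈ range (⌊T/b⌋₊+1),
        if a*(m:ℝ) + b*(n:ℝ) ≤ T then (T - (a*(m:ℝ) + b*(n:ℝ))) else 0)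
      = ∑ n ∈ ((range (⌊T/b⌋₊+1)).filter fun n : ℕ => b*(n:ℝ) ≤ T - a*m),
          (T - (a*(m:ℝ) + b*(n:ℝ))) := by
    rw [Finset.sum_filter]
    refine Finset.sum_congr rfl fun n _ => ?_
    have : (a*(m:ℝ) + b*(n:ℝ) ≤ T) ↔ (b*(n:ℝ) ≤ T - a*m) := by constructor <;> intro h <;> linarith
    exact if_congr this rfl rfl
  rw [step1, filter_range_eq b (T - a*m) hb hxm _ hA]
  exact Finset.sum_congr rfl fun n _ => by ring

lemma F_bound (a b T : ℝ) (ha : 0 < a) (hb : 0 < b) (hT : 0 ≤ T) :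
    |(∑ p ∈ Fr a b T, (T - (a*(p.1:ℝ) + b*(p.2:ℝ))))
        - (T^3/(6*a*b) + (a+b)*T^2/(4*a*b))|
      ≤ (1/4 + a/(12*b) + b/(8*a))*T + (a^2/(4*b) + a/16 + b/8) := by
  rw [F_repr a b T ha hb hT]
  set M := ⌊T/a⌋₊ with hM
  set S1 := ∑ m ∈ range (M+1), (T - a*(m:ℝ)) with hS1
  set S2 := ∑ m ∈ range (M+1), (T - a*(m:ℝ))^2 with hS2
  have hgm : ∀ m ∈ range (M+1),
      (T - a*(m:ℝ))^2/(2*b) + (T - a*(m:ℝ))/2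
        ≤ (∑ n ∈ range (⌊(T - a*(m:ℝ))/b⌋₊+1), ((T - a*(m:ℝ)) - b*(n:ℝ))) ∧
      (∑ n ∈ range (⌊(T - a*(m:ℝ))/b⌋₊+1), ((T - a*(m:ℝ)) - b*(n:ℝ)))
        ≤ (T - a*(m:ℝ))^2/(2*b) + (T - a*(m:ℝ))/2 + b/8 := by
    intro m hm
    rw [Finset.mem_range, Nat.lt_succ_iff] at hm
    have hxm : 0 ≤ T - a*m := by linarith [am_le a T ha hT hm]
    exact sum_linear_bounds b (T - a*(m:ℝ)) hb hxm
  have hlow : S2/(2*b) + S1/2 ≤ ∑ m ∈ range (M+1),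
      ∑ n ∈ range (⌊(T - a*(m:ℝ))/b⌋₊+1), ((T - a*(m:ℝ)) - b*(n:ℝ)) := by
    have := Finset.sum_le_sum (fun m hm => (hgm m hm).1)
    calc S2/(2*b) + S1/2
        = ∑ m ∈ range (M+1), ((T - a*(m:ℝ))^2/(2*b) + (T - a*(m:ℝ))/2) := by
          rw [Finset.sum_add_distrib, ← Finset.sum_div, ← Finset.sum_div, hS1, hS2]
      _ ≤ _ := this
  have hup : (∑ m ∈ range (M+1),
      ∑ n ∈ range (⌊(T - a*(m:ℝ))/b⌋₊+1), ((T - a*(m:ℝ)) - b*(n:ℝ)))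
      ≤ S2/(2*b) + S1/2 + ((M:ℝ)+1)*(b/8) := by
    have := Finset.sum_le_sum (fun m hm => (hgm m hm).2)
    calc (∑ m ∈ range (M+1),
        ∑ n ∈ range (⌊(T - a*(m:ℝ))/b⌋₊+1), ((T - a*(m:ℝ)) - b*(n:ℝ)))
        ≤ ∑ m ∈ range (M+1), ((T - a*(m:ℝ))^2/(2*b) + (T - a*(m:ℝ))/2 + b/8) := this
      _ = S2/(2*b) + S1/2 + ((M:ℝ)+1)*(b/8) := by
          rw [Finset.sum_add_distrib, Finset.sum_add_distrib, Finset.sum_const,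
            Finset.card_range, ← Finset.sum_div, ← Finset.sum_div, hS1, hS2]
          push_cast; ring
  have hS1b := sum_linear_bounds a T ha hT
  have hS2b := sum_sq_bounds a T ha hT
  have hMle : ((M:ℝ)+1) ≤ T/a + 1 := by
    have := Nat.floor_le (div_nonneg hT ha.le); rw [hM]; push_cast; linarith
  have hS2l : (T^3/(3*a) + T^2/2)/(2*b) ≤ S2/(2*b) := by gcongr; exact hS2b.1
  have hS2u : S2/(2*b) ≤ (T^3/(3*a) + T^2/2 + a*T/6 + a^2/2)/(2*b) := by gcongr; exact hS2b.2
  have hS1l : (T^2/(2*a) + T/2)/2 ≤ S1/2 := by gcongr; exact hS1b.1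
  have hS1u : S1/2 ≤ (T^2/(2*a) + T/2 + a/8)/2 := by gcongr; exact hS1b.2
  have hMub : ((M:ℝ)+1)*(b/8) ≤ (T/a+1)*(b/8) := by
    apply mul_le_mul_of_nonneg_right hMle; positivity
  have id1 : (T^3/(3*a) + T^2/2)/(2*b) + (T^2/(2*a) + T/2)/2
      - (T^3/(6*a*b) + (a+b)*T^2/(4*a*b)) = T/4 := by field_simp; ring
  have id2 : (T^3/(3*a) + T^2/2 + a*T/6 + a^2/2)/(2*b) + (T^2/(2*a) + T/2 + a/8)/2
      + (T/a+1)*(b/8) - (T^3/(6*a*b) + (a+b)*T^2/(4*a*b))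
      = T/4 + a*T/(12*b) + a^2/(4*b) + a/16 + b*T/(8*a) + b/8 := by field_simp; ring
  have n1 : (0:ℝ) ≤ a/(12*b)*T := by positivity
  have n2 : (0:ℝ) ≤ b/(8*a)*T := by positivity
  have n3 : (0:ℝ) ≤ a^2/(4*b) := by positivity
  have n4 : (0:ℝ) ≤ a/16 := by positivity
  have n5 : (0:ℝ) ≤ b/8 := by positivity
  have hTq : (0:ℝ) ≤ T/4 := by positivity
  have e1 : a*T/(12*b) = a/(12*b)*T := by ring
  have e2 : b*T/(8*a) = b/(8*a)*T := by ring
  rw [abs_le]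
  constructor
  · linarith
  · linarith

lemma N_eqOn (a b T : ℝ) (hT0 : 0 ≤ T)
    (hmem : ∀ T : ℝ, 0 ≤ T → ∀ p : ℕ × ℕ, (p ∈ Fr a b T ↔ a*(p.1:ℝ) + b*(p.2:ℝ) ≤ T))
    (hNF : ∀ x : ℝ, 0 ≤ x →
      Set.ncard {p : ℕ × ℕ | a * (p.1 : ℝ) + b * (p.2 : ℝ) ≤ x} = (Fr a b x).card) :
    Set.EqOn (fun x => ((Set.ncard {p : ℕ × ℕ | a * (p.1 : ℝ) + b * (p.2 : ℝ) ≤ x} : ℕ) : ℝ))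
      (fun x => ∑ p ∈ Fr a b T,
        (if a*(p.1:ℝ) + b*(p.2:ℝ) ≤ x then (1:ℝ) else 0)) (Set.uIcc 0 T) := by
  rw [Set.uIcc_of_le hT0]
  intro x hx
  have hFx : Fr a b x = (Fr a b T).filter (fun p => a*(p.1:ℝ) + b*(p.2:ℝ) ≤ x) := by
    ext p
    rw [Finset.mem_filter, hmem x hx.1 p, hmem T hT0 p]
    exact ⟨fun h => ⟨le_trans h hx.2, h⟩, fun h => h.2⟩
  simp only
  rw [hNF x hx.1, hFx, Finset.card_filter]
  push_cast
  rfl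

lemma integral_N (a b T : ℝ) (ha : 0 < a) (hb : 0 < b) (hT0 : 0 ≤ T)
    (hmem : ∀ T : ℝ, 0 ≤ T → ∀ p : ℕ × ℕ, (p ∈ Fr a b T ↔ a*(p.1:ℝ) + b*(p.2:ℝ) ≤ T))
    (hNF : ∀ x : ℝ, 0 ≤ x →
      Set.ncard {p : ℕ × ℕ | a * (p.1 : ℝ) + b * (p.2 : ℝ) ≤ x} = (Fr a b x).card) :
    (∫ x in (0:ℝ)..T, ((Set.ncard {p : ℕ × ℕ | a * (p.1 : ℝ) + b * (p.2 : ℝ) ≤ x} : ℕ) : ℝ))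
      = ∑ p ∈ Fr a b T, (T - (a*(p.1:ℝ) + b*(p.2:ℝ))) := by
  rw [intervalIntegral.integral_congr (N_eqOn a b T hT0 hmem hNF)]
  have hint : ∀ p ∈ Fr a b T, IntervalIntegrable
      (fun x => if a*(p.1:ℝ) + b*(p.2:ℝ) ≤ x then (1:ℝ) else 0) volume 0 T :=
    fun p _ => ((ind_mono (a*(p.1:ℝ) + b*(p.2:ℝ))).monotoneOn _).intervalIntegrable
  rw [intervalIntegral.integral_finset_sum hint]
  refine Finset.sum_congr rfl fun p hp => ?_
  have hcp : (0:ℝ) ≤ a*(p.1:ℝ) + b*(p.2:ℝ) := by positivity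
  exact integral_ind _ T hcp ((hmem T hT0 p).mp hp)

lemma N_monoOn (a b T : ℝ) (ha : 0 < a) (hb : 0 < b) (hT0 : 0 ≤ T) :
    MonotoneOn (fun x => ((Set.ncard {p : ℕ × ℕ | a * (p.1 : ℝ) + b * (p.2 : ℝ) ≤ x} : ℕ) : ℝ))
      (Set.uIcc 0 T) := by
  rw [Set.uIcc_of_le hT0]
  intro u hu v hv huv
  have hsub : {p : ℕ × ℕ | a * (p.1 : ℝ) + b * (p.2 : ℝ) ≤ u}
      ⊆ {p : ℕ × ℕ | a * (p.1 : ℝ) + b * (p.2 : ℝ) ≤ v} := fun p hp => le_trans hp huv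
  have hfin : {p : ℕ × ℕ | a * (p.1 : ℝ) + b * (p.2 : ℝ) ≤ v}.Finite := by
    rw [set_eq_Fr a b v ha hb hv.1]; exact (Fr a b v).finite_toSet
  simp only
  exact_mod_cast Set.ncard_le_ncard hsub hfin

/-- **Two-weight averaged asymptotic Riemann–Roch.**
Let `a, b > 0` be real.  Then
`#{(m,n) ∈ ℤ₊² : am + bn ≤ x} = x²/(2ab) + O(x)` as `x → ∞`, and moreover
`lim_{T→∞} (1/T²)·∫₀ᵀ ( #{(m,n) : am+bn ≤ x} − x²/(2ab) − (a+b)x/(2ab) ) dx = 0`. -/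
theorem two_weight_averaged_RR (a b : ℝ) (ha : 0 < a) (hb : 0 < b) :
    (∃ C : ℝ, ∀ x : ℝ, 1 ≤ x →
      |((Set.ncard {p : ℕ × ℕ | a * (p.1 : ℝ) + b * (p.2 : ℝ) ≤ x} : ℕ) : ℝ)
        - x ^ 2 / (2 * a * b)| ≤ C * x) ∧
    Tendsto (fun T : ℝ =>
        (1 / T ^ 2) * ∫ x in (0:ℝ)..T,
          (((Set.ncard {p : ℕ × ℕ | a * (p.1 : ℝ) + b * (p.2 : ℝ) ≤ x} : ℕ) : ℝ)
            - x ^ 2 / (2 * a * b) - (a + b) * x / (2 * a * b)))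
      atTop (nhds 0) := by
  have hNF : ∀ x : ℝ, 0 ≤ x →
      Set.ncard {p : ℕ × ℕ | a * (p.1 : ℝ) + b * (p.2 : ℝ) ≤ x} = (Fr a b x).card := by
    intro x hx
    rw [set_eq_Fr a b x ha hb hx, Set.ncard_coe_finset]
  have hmem : ∀ T : ℝ, 0 ≤ T → ∀ p : ℕ × ℕ,
      (p ∈ Fr a b T ↔ a*(p.1:ℝ) + b*(p.2:ℝ) ≤ T) := by
    intro T hT p
    rw [← Finset.mem_coe, ← set_eq_Fr a b T ha hb hT]
    rfl
  constructor
  · refine ⟨1/(2*b) + a/(8*b) + 1/a + 1, fun x hx => ?_⟩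
    have h0 : (0:ℝ) ≤ x := by linarith
    rw [hNF x h0]
    have hB := N_bounds a b x ha hb h0
    have c2 : a/(8*b) ≤ a/(8*b)*x := le_mul_of_one_le_right (by positivity) hx
    have hx2b : (0:ℝ) ≤ x/(2*b) := by positivity
    rw [abs_le]
    constructor
    · have : (0:ℝ) ≤ (1/(2*b) + a/(8*b) + 1/a + 1)*x := by positivity
      linarith [hB.1]
    · have e1 : (1/(2*b) + a/(8*b) + 1/a + 1)*x = x/(2*b) + a/(8*b)*x + x/a + x := by ring
      linarith [hB.2]
  · set C5 : ℝ := 1/4 + a/(12*b) + b/(8*a) with hC5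
    set C6 : ℝ := a^2/(4*b) + a/16 + b/8 with hC6
    have hC5p : 0 < C5 := by rw [hC5]; positivity
    have hC6p : 0 < C6 := by rw [hC6]; positivity
    have key : ∀ T : ℝ, 1 ≤ T →
        |∫ x in (0:ℝ)..T,
            (((Set.ncard {p : ℕ × ℕ | a * (p.1 : ℝ) + b * (p.2 : ℝ) ≤ x} : ℕ) : ℝ)
              - x ^ 2 / (2 * a * b) - (a + b) * x / (2 * a * b))| ≤ C5*T + C6 := by
      intro T hT
      have hT0 : (0:ℝ) ≤ T := by linarith
      have hNint : IntervalIntegrable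
          (fun x => ((Set.ncard {p : ℕ × ℕ | a * (p.1 : ℝ) + b * (p.2 : ℝ) ≤ x} : ℕ) : ℝ))
          volume 0 T := (N_monoOn a b T ha hb hT0).intervalIntegrable
      have hp1int : IntervalIntegrable (fun x : ℝ => x ^ 2 / (2*a*b)) volume 0 T :=
        (Continuous.div_const (continuous_pow 2) _).intervalIntegrable 0 T
      have hp2int : IntervalIntegrable (fun x : ℝ => (a+b) * x / (2*a*b)) volume 0 T :=
        (Continuous.div_const (continuous_const.mul continuous_id) _).intervalIntegrable 0 T
      have hsplit : (∫ x in (0:ℝ)..T,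
            (((Set.ncard {p : ℕ × ℕ | a * (p.1 : ℝ) + b * (p.2 : ℝ) ≤ x} : ℕ) : ℝ)
              - x ^ 2 / (2 * a * b) - (a + b) * x / (2 * a * b)))
          = (∫ x in (0:ℝ)..T,
              ((Set.ncard {p : ℕ × ℕ | a * (p.1 : ℝ) + b * (p.2 : ℝ) ≤ x} : ℕ) : ℝ))
            - (∫ x in (0:ℝ)..T, x ^ 2 / (2*a*b))
            - (∫ x in (0:ℝ)..T, (a+b) * x / (2*a*b)) := by
        rw [intervalIntegral.integral_sub (hNint.sub hp1int) hp2int,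
          intervalIntegral.integral_sub hNint hp1int]
      have hI1 : (∫ x in (0:ℝ)..T, x ^ 2 / (2*a*b)) = T^3/(6*a*b) := by
        rw [intervalIntegral.integral_div, integral_pow]
        norm_num
        ring
      have hI2 : (∫ x in (0:ℝ)..T, (a+b) * x / (2*a*b)) = (a+b)*T^2/(4*a*b) := by
        have e : (fun x : ℝ => (a+b) * x / (2*a*b)) = fun x : ℝ => ((a+b)/(2*a*b)) * x := by
          funext x; ring
        rw [e, intervalIntegral.integral_const_mul, integral_id]
        norm_num
        ring
      rw [hsplit, hI1, hI2, integral_N a b T ha hb hT0 hmem hNF, sub_sub]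
      exact F_bound a b T ha hb hT0
    have hbound : ∀ᶠ T : ℝ in atTop,
        ‖(1 / T ^ 2) * ∫ x in (0:ℝ)..T,
            (((Set.ncard {p : ℕ × ℕ | a * (p.1 : ℝ) + b * (p.2 : ℝ) ≤ x} : ℕ) : ℝ)
              - x ^ 2 / (2 * a * b) - (a + b) * x / (2 * a * b))‖
          ≤ (C5 + C6) / T := by
      filter_upwards [eventually_ge_atTop (1:ℝ)] with T hT
      have hT0 : (0:ℝ) < T := by linarith
      rw [Real.norm_eq_abs, abs_mul, abs_of_pos (by positivity : (0:ℝ) < 1/T^2)]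
      have hk := key T hT
      have step1 : 1/T^2 * |∫ x in (0:ℝ)..T,
            (((Set.ncard {p : ℕ × ℕ | a * (p.1 : ℝ) + b * (p.2 : ℝ) ≤ x} : ℕ) : ℝ)
              - x ^ 2 / (2 * a * b) - (a + b) * x / (2 * a * b))|
          ≤ 1/T^2 * (C5*T + C6) := by
        apply mul_le_mul_of_nonneg_left hk; positivity
      have step2 : 1/T^2 * (C5*T + C6) ≤ (C5 + C6) / T := by
        have e : 1/T^2 * (C5*T + C6) = C5/T + C6/T^2 := by field_simp
        have e2 : (C5 + C6)/T = C5/T + C6/T := by ring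
        have h3 : C6/T^2 ≤ C6/T :=
          div_le_div_of_nonneg_left hC6p.le hT0 (by nlinarith)
        rw [e, e2]; linarith
      linarith
    have hlim : Tendsto (fun T : ℝ => (C5 + C6) / T) atTop (nhds 0) := by
      simpa [div_eq_mul_inv] using tendsto_inv_atTop_zero.const_mul (C5 + C6)
    exact squeeze_zero_norm' hbound hlim
end
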